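/- arXiv:1102.2734 — 3 statements merged into one kernel-verified Lean document; each statement's English description precedes it below -/
import Mathlib

section
/- For an (n,k) MDS code C over a finite field F_q, the treewidth equals the trelliswidth: κ(C) = τ(C) = min{k, n − k + 1}. -/
open Module

/-- The submodule of vectors supported on `J` (i.e. zero outside `J`). -/
def supportedOn (F : Type) [Field F] {n : ℕ} (J : Set (Fin n)) : Submodule F (Fin n → F) :=
  Submodule.pi Jᶜ fun _ => ⊥

/-- Dimension of the shortening `C_J` of the code `C` to the coordinates in `J`. -/
noncomputable def shortDim {F : Type} [Field F] {n : ℕ}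
    (C : Submodule F (Fin n → F)) (J : Set (Fin n)) : ℕ :=
  finrank F ↥(C ⊓ supportedOn F J)

/-- Hamming weight of a vector. -/
noncomputable def hWeight {F : Type} [Field F] {n : ℕ} (c : Fin n → F) : ℕ :=
  {i | c i ≠ 0}.ncard

/-- Minimum distance of a linear code. -/
noncomputable def minDist {F : Type} [Field F] {n : ℕ} (C : Submodule F (Fin n → F)) : ℕ :=
  sInf {w : ℕ | ∃ c ∈ C, c ≠ (0 : Fin n → F) ∧ hWeight c = w}

/-- Trelliswidth: the least branch complexity of any trellis realization of `C`,
minimized over all orderings (bijections from positions to coordinates) of `C`. -/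
noncomputable def trellisWidth {F : Type} [Field F] {n : ℕ}
    (C : Submodule F (Fin n → F)) : ℕ :=
  sInf {t : ℕ | ∃ π : Equiv.Perm (Fin n),
    t = Finset.univ.sup fun i : Fin n =>
      finrank F ↥C - shortDim C (⇑π '' {j | j < i}) - shortDim C (⇑π '' {j | i < j})}

/-- Degree of a vertex (the number of its neighbours). -/
noncomputable def deg {V : Type} (T : SimpleGraph V) (v : V) : ℕ :=
  (T.neighborSet v).ncard

/-- The set of leaves (degree-1 vertices) of a graph. -/
def leaves {V : Type} (T : SimpleGraph V) : Set V :=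
  {v | deg T v = 1}

/-- A cubic tree: every node is a leaf (degree 1) or internal of degree 3. -/
def IsCubic {V : Type} (T : SimpleGraph V) : Prop :=
  ∀ v, deg T v = 1 ∨ deg T v = 3

/-- `compAway T v u` : the vertex set of the component of `T` minus the edge `{v,u}`
containing `u` (hence not containing `v`); this is `T_{e,v}` for `e = {u,v}`. -/
def compAway {V : Type} (T : SimpleGraph V) (v u : V) : Set V :=
  {w | (T.deleteEdges {s(v, u)}).Reachable u w}

/-- `nAway T v u` : the number of leaves of `T` lying in the component of `T - {v,u}`
not containing `v`; this is `n_{e,v}` for `e = {u,v}`. -/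
noncomputable def nAway {V : Type} (T : SimpleGraph V) (v u : V) : ℕ :=
  (compAway T v u ∩ leaves T).ncard

/-- Neighbours of a vertex, as a `Finset`. -/
noncomputable def nbrFinset {V : Type} [Fintype V] (T : SimpleGraph V) (v : V) : Finset V :=
  (T.neighborSet v).toFinite.toFinset

/-- `κ_v`: local constraint-code dimension at node `v` of the minimal realization of `C`
on the tree decomposition `(T, ω)`. -/
noncomputable def kappaNode {F : Type} [Field F] {n : ℕ} (C : Submodule F (Fin n → F))
    {V : Type} [Fintype V] (T : SimpleGraph V) (ω : Fin n → V) (v : V) : ℕ :=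
  finrank F ↥C - ∑ u ∈ nbrFinset T v, shortDim C (ω ⁻¹' compAway T v u)

/-- Constraint complexity `κ(C; T, ω)` of the minimal realization of `C` on `(T, ω)`. -/
noncomputable def constraintComplexity {F : Type} [Field F] {n : ℕ}
    (C : Submodule F (Fin n → F)) {V : Type} [Fintype V]
    (T : SimpleGraph V) (ω : Fin n → V) : ℕ :=
  Finset.univ.sup (kappaNode C T ω)

/-- Treewidth of a code: the least constraint complexity of any of its tree
decompositions `(T, ω)` with `T` a finite tree. -/
noncomputable def treeWidth {F : Type} [Field F] {n : ℕ}
    (C : Submodule F (Fin n → F)) : ℕ :=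
  sInf {t : ℕ | ∃ (N : ℕ) (T : SimpleGraph (Fin N)) (ω : Fin n → Fin N),
    T.IsTree ∧ t = constraintComplexity C T ω}



section Lemmas
open Module
variable {F : Type} [Field F] {n : ℕ}
lemma mem_supportedOn {J : Set (Fin n)} {x : Fin n → F} :
    x ∈ supportedOn F J ↔ ∀ i, i ∉ J → x i = 0 := by
  simp [supportedOn, Submodule.mem_pi]

/-- restriction map to coordinates in `S` -/
noncomputable def restr (F : Type) [Field F] {n : ℕ} (S : Set (Fin n)) :
    (Fin n → F) →ₗ[F] (S → F) :=
  LinearMap.funLeft F F (Subtype.val)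

lemma ker_restr (S : Set (Fin n)) :
    LinearMap.ker (restr F S) = supportedOn F Sᶜ := by
  ext x
  simp only [LinearMap.mem_ker, restr, mem_supportedOn]
  constructor
  · intro h i hi
    have := congrFun h ⟨i, by simpa using hi⟩
    simpa [LinearMap.funLeft_apply] using this
  · intro h
    funext i
    exact h i.1 (by simpa using i.2)

lemma finrank_supportedOn (J : Set (Fin n)) :
    finrank F (supportedOn F J) = J.ncard := by
  classical
  have hsurj : Function.Surjective (restr F Jᶜ) :=
    LinearMap.funLeft_surjective_of_injective F F _ Subtype.coe_injective
  have h := LinearMap.finrank_range_add_finrank_ker (restr F Jᶜ)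
  rw [LinearMap.range_eq_top.mpr hsurj] at h
  rw [ker_restr, compl_compl] at h
  have h1 : finrank F (⊤ : Submodule F (↥Jᶜ → F)) = Jᶜ.ncard := by
    rw [finrank_top, Module.finrank_fintype_fun_eq_card, ← Nat.card_eq_fintype_card,
      Nat.card_coe_set_eq]
  have h2 : finrank F (Fin n → F) = n := by
    simp [Module.finrank_fintype_fun_eq_card]
  have h3 : J.ncard + Jᶜ.ncard = n := by
    rw [Set.ncard_add_ncard_compl]
    simp
  omega

lemma shortDim_eq {k : ℕ} (C : Submodule F (Fin n → F)) (hk : finrank F ↥C = k)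
    (hkn : k ≤ n)
    (hw : ∀ c ∈ C, c ≠ 0 → n - k + 1 ≤ hWeight c) (J : Set (Fin n)) :
    shortDim C J = J.ncard - (n - k) := by
  classical
  have hJn : J.ncard ≤ n := by
    have := Set.ncard_le_ncard (Set.subset_univ J) (Set.toFinite _)
    simpa [Set.ncard_univ] using this
  have hfr : finrank F (Fin n → F) = n := by
    simp [Module.finrank_fintype_fun_eq_card]
  have hlow : k + J.ncard ≤ shortDim C J + n := by
    have h1 := Submodule.finrank_sup_add_finrank_inf_eq C (supportedOn F J)
    have h2 : finrank F ↥(C ⊔ supportedOn F J) ≤ n := by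
      have := Submodule.finrank_le (C ⊔ supportedOn F J)
      omega
    rw [finrank_supportedOn] at h1
    unfold shortDim
    omega
  have hup : shortDim C J ≤ J.ncard - (n - k) := by
    obtain ⟨K, hKJ, hKcard⟩ := Set.exists_subset_card_eq
      (show J.ncard - (n - k) ≤ J.ncard by omega)
    have hKn : K.ncard = J.ncard - (n - k) := hKcard
    let D := C ⊓ supportedOn F J
    have hinj : Function.Injective ((restr F K).comp D.subtype) := by
      rw [← LinearMap.ker_eq_bot]
      rw [Submodule.eq_bot_iff]
      rintro ⟨x, hxD⟩ hx0
      simp only [LinearMap.mem_ker, LinearMap.comp_apply, Submodule.subtype_apply] at hx0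
      ext1
      by_contra hx
      have hxne : x ≠ 0 := fun h => hx (by simp [h])
      have hsupp : {i | x i ≠ 0} ⊆ J \ K := by
        intro i hi
        refine ⟨?_, ?_⟩
        · by_contra hiJ
          exact hi ((mem_supportedOn.mp hxD.2) i hiJ)
        · intro hiK
          have := congrFun hx0 ⟨i, hiK⟩
          exact hi (by simpa [restr, LinearMap.funLeft_apply] using this)
      have hwle : hWeight x ≤ (J \ K).ncard := Set.ncard_le_ncard hsupp (Set.toFinite _)
      have hJK : (J \ K).ncard = J.ncard - K.ncard := Set.ncard_diff hKJ (Set.toFinite _)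
      have hge := hw x hxD.1 hxne
      omega
    have hle := LinearMap.finrank_le_finrank_of_injective hinj
    have hKfr : finrank F (↥K → F) = K.ncard := by
      rw [Module.finrank_fintype_fun_eq_card, ← Nat.card_eq_fintype_card,
        Nat.card_coe_set_eq]
    have : shortDim C J ≤ K.ncard := by
      rw [← hKfr]
      exact hle
    omega
  omega

lemma weight_lb {k : ℕ} (C : Submodule F (Fin n → F)) (hmds : minDist C = n - k + 1) :
    ∀ c ∈ C, c ≠ 0 → n - k + 1 ≤ hWeight c := by
  intro c hc hc0
  have : hWeight c ∈ {w : ℕ | ∃ c ∈ C, c ≠ (0 : Fin n → F) ∧ hWeight c = w} :=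
    ⟨c, hc, hc0, rfl⟩
  have h2 := Nat.sInf_le this
  rw [show sInf {w | ∃ c ∈ C, c ≠ 0 ∧ hWeight c = w} = n - k + 1 from hmds] at h2
  omega

lemma one_le_k {k : ℕ} (C : Submodule F (Fin n → F)) (hk : finrank F ↥C = k)
    (hmds : minDist C = n - k + 1) : 1 ≤ k := by
  by_contra h
  push_neg at h
  interval_cases k
  have hC : C = ⊥ := by
    rw [← Submodule.finrank_eq_zero]
    exact hk
  have hempty : {w : ℕ | ∃ c ∈ C, c ≠ (0 : Fin n → F) ∧ hWeight c = w} = ∅ := by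
    ext w
    simp only [Set.mem_setOf_eq, Set.mem_empty_iff_false, iff_false]
    rintro ⟨c, hc, hc0, -⟩
    rw [hC, Submodule.mem_bot] at hc
    exact hc0 hc
  rw [minDist, hempty, Nat.sInf_empty] at hmds
  omega

lemma k_le_n {k : ℕ} (C : Submodule F (Fin n → F)) (hk : finrank F ↥C = k) : k ≤ n := by
  have := Submodule.finrank_le C
  have hfr : finrank F (Fin n → F) = n := by
    simp [Module.finrank_fintype_fun_eq_card]
  omega

lemma ncard_lt_fin (i : Fin n) : {j : Fin n | j < i}.ncard = i.val := by
  have : {j : Fin n | j < i} = ↑(Finset.Iio i) := by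
    ext j; simp
  rw [this, Set.ncard_coe_finset, Fin.card_Iio]

lemma ncard_gt_fin (i : Fin n) : {j : Fin n | i < j}.ncard = n - 1 - i.val := by
  have : {j : Fin n | i < j} = ↑(Finset.Ioi i) := by
    ext j; simp
  rw [this, Set.ncard_coe_finset, Fin.card_Ioi]

end Lemmas

section Trellis
open Module
variable {F : Type} [Field F] {n : ℕ}

lemma trellis_eq {k : ℕ} (C : Submodule F (Fin n → F)) (hk : finrank F ↥C = k)
    (h1k : 1 ≤ k) (hkn : k ≤ n)
    (hsd : ∀ J : Set (Fin n), shortDim C J = J.ncard - (n - k)) :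
    trellisWidth C = min k (n - k + 1) := by
  have hn : 1 ≤ n := le_trans h1k hkn
  have key : ∀ π : Equiv.Perm (Fin n), ∀ i : Fin n,
      (finrank F ↥C - shortDim C (⇑π '' {j | j < i}) - shortDim C (⇑π '' {j | i < j}))
        = k - (i.val - (n - k)) - (n - 1 - i.val - (n - k)) := by
    intro π i
    rw [hk, hsd, hsd, Set.ncard_image_of_injective _ π.injective,
      Set.ncard_image_of_injective _ π.injective, ncard_lt_fin, ncard_gt_fin]
  have hsup : ∀ π : Equiv.Perm (Fin n),
      (Finset.univ.sup fun i : Fin n =>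
        finrank F ↥C - shortDim C (⇑π '' {j | j < i}) - shortDim C (⇑π '' {j | i < j}))
      = min k (n - k + 1) := by
    intro π
    apply le_antisymm
    · apply Finset.sup_le
      intro i _
      rw [key]
      have := i.isLt
      omega
    · have hlt : min (k - 1) (n - k) < n := by omega
      have := Finset.le_sup (f := fun i : Fin n =>
        finrank F ↥C - shortDim C (⇑π '' {j | j < i}) - shortDim C (⇑π '' {j | i < j}))
        (Finset.mem_univ (⟨min (k - 1) (n - k), hlt⟩ : Fin n))
      rw [key] at this
      refine le_trans ?_ this
      simp only [Fin.val_mk]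
      omega
  have hset : {t : ℕ | ∃ π : Equiv.Perm (Fin n),
      t = Finset.univ.sup fun i : Fin n =>
        finrank F ↥C - shortDim C (⇑π '' {j | j < i}) - shortDim C (⇑π '' {j | i < j})}
      = {min k (n - k + 1)} := by
    ext t
    simp only [Set.mem_setOf_eq, Set.mem_singleton_iff]
    constructor
    · rintro ⟨π, rfl⟩
      exact hsup π
    · rintro rfl
      exact ⟨1, (hsup 1).symm⟩
  rw [trellisWidth, hset, csInf_singleton]

end Trellis

section Graph
open SimpleGraph
variable {V : Type} {T : SimpleGraph V}

lemma mem_of_walk {S : Set V} (hcl : ∀ a b, T.Adj a b → a ∈ S → b ∈ S) :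
    ∀ {a b : V}, T.Walk a b → a ∈ S → b ∈ S := by
  intro a b p
  induction p with
  | nil => exact id
  | cons h _ ih => exact fun ha => ih (hcl _ _ h ha)

lemma self_mem_compAway (v u : V) : u ∈ compAway T v u := Reachable.refl u

lemma not_mem_compAway (hT : T.IsAcyclic) {v u : V} (h : T.Adj v u) :
    v ∉ compAway T v u := by
  have hb := (isAcyclic_iff_forall_adj_isBridge.mp hT) h
  rw [isBridge_iff] at hb
  intro hv
  exact hb (Reachable.symm hv)

lemma sym2_ne {v u w : V} (h : T.Adj v u) (hw : w ≠ v) : s(u, w) ≠ s(v, u) := by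
  intro he
  rw [Sym2.eq_iff] at he
  rcases he with ⟨h1, h2⟩ | ⟨h1, h2⟩
  · exact T.ne_of_adj h h1.symm
  · exact hw h2

lemma compAway_subset [DecidableEq V] (hT : T.IsAcyclic) {v u w : V} (h : T.Adj v u) (h2 : T.Adj u w)
    (hw : w ≠ v) : compAway T u w ⊆ compAway T v u := by
  intro x hx
  obtain ⟨p⟩ := hx
  by_cases he : s(v, u) ∈ p.edges
  · exfalso
    have hv : v ∈ p.support := Walk.fst_mem_support_of_mem_edges p he
    have hrv : (T.deleteEdges {s(u, w)}).Reachable w v := ⟨p.takeUntil v hv⟩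
    have hadj : (T.deleteEdges {s(u, w)}).Adj v u := by
      rw [deleteEdges_adj]
      refine ⟨h, ?_⟩
      simp only [Set.mem_singleton_iff]
      exact fun hh => sym2_ne h hw hh.symm
    exact not_mem_compAway hT h2 (hrv.trans hadj.reachable)
  · have hp' : ∀ e ∈ p.edges, e ∈ (T.deleteEdges {s(v, u)}).edgeSet := by
      intro e hep
      have h1 : e ∈ (T.deleteEdges {s(u, w)}).edgeSet := Walk.edges_subset_edgeSet p hep
      rw [edgeSet_deleteEdges] at h1 ⊢
      refine ⟨h1.1, ?_⟩
      simp only [Set.mem_singleton_iff]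
      intro hevu
      exact he (hevu ▸ hep)
    have hwx : (T.deleteEdges {s(v, u)}).Reachable w x := ⟨p.transfer _ hp'⟩
    have huw : (T.deleteEdges {s(v, u)}).Adj u w := by
      rw [deleteEdges_adj]
      exact ⟨h2, by simp [sym2_ne h hw]⟩
    exact huw.reachable.trans hwx

lemma compAway_compl (hT : T.IsTree) {v u : V} (h : T.Adj v u) :
    compAway T u v = (compAway T v u)ᶜ := by
  have hey : s(u, v) = s(v, u) := Sym2.eq_swap
  ext x
  simp only [Set.mem_compl_iff]
  constructor
  · intro hx hx'
    have h1 : (T.deleteEdges {s(v, u)}).Reachable v x := by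
      rw [← hey]; exact hx
    exact not_mem_compAway hT.2 h (h1.trans hx'.symm |>.symm)
  · intro hx
    have hcover : ∀ y, y ∈ compAway T u v ∪ compAway T v u := by
      intro y
      have hcl : ∀ a b, T.Adj a b →
          a ∈ compAway T u v ∪ compAway T v u → b ∈ compAway T u v ∪ compAway T v u := by
        intro a b hab ha
        by_cases hab' : s(a, b) = s(v, u)
        · rw [Sym2.eq_iff] at hab'
          rcases hab' with ⟨-, hb⟩ | ⟨-, hb⟩
          · subst hb
            exact Or.inr (self_mem_compAway _ _)
          · subst hb
            exact Or.inl (self_mem_compAway _ _)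
        · rcases ha with ha | ha
          · left
            refine ha.trans (Adj.reachable ?_)
            rw [deleteEdges_adj]
            exact ⟨hab, by simp [hey ▸ hab']⟩
          · right
            refine ha.trans (Adj.reachable ?_)
            rw [deleteEdges_adj]
            exact ⟨hab, by simp [hab']⟩
      obtain ⟨p⟩ := hT.1.preconnected v y
      exact mem_of_walk hcl p (Or.inl (self_mem_compAway u v))
    rcases hcover x with hx' | hx'
    · exact hx'
    · exact absurd hx' hx

end Graph

section Walk
open Module SimpleGraph

lemma exists_good {F : Type} [Field F] {n k : ℕ} (C : Submodule F (Fin n → F))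
    {V : Type} [Fintype V] [DecidableEq V] {T : SimpleGraph V}
    (hT : T.IsTree) (ω : Fin n → V) (hk : finrank F ↥C = k) (h1k : 1 ≤ k) (hkn : k ≤ n)
    (hsd : ∀ J : Set (Fin n), shortDim C J = J.ncard - (n - k)) :
    ∃ x : V, min k (n - k + 1) ≤ kappaNode C T ω x := by
  classical
  have hnbr : ∀ v u : V, u ∈ nbrFinset T v ↔ T.Adj v u := by
    intro v u
    simp [nbrFinset, Set.Finite.mem_toFinset, mem_neighborSet]
  have hAc : ∀ v u : V, T.Adj v u →
      (ω ⁻¹' compAway T u v).ncard = n - (ω ⁻¹' compAway T v u).ncard ∧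
      (ω ⁻¹' compAway T v u).ncard ≤ n := by
    intro v u h
    have h1 : ω ⁻¹' compAway T u v = (ω ⁻¹' compAway T v u)ᶜ := by
      rw [compAway_compl hT h, Set.preimage_compl]
    have h2 := Set.ncard_add_ncard_compl (ω ⁻¹' compAway T v u) (Set.toFinite _)
    have h3 : Nat.card (Fin n) = n := by simp
    constructor
    · rw [h1]; omega
    · omega
  have step : ∀ m : ℕ, ∀ v u : V, T.Adj v u → (compAway T v u).ncard ≤ m →
      (ω ⁻¹' compAway T u v).ncard ≤ max (n - k) (k - 1) →
      ∃ x : V, min k (n - k + 1) ≤ kappaNode C T ω x := by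
    intro m
    induction m with
    | zero =>
      intro v u h hm _
      exfalso
      have h1 : 0 < (compAway T v u).ncard :=
        (Set.ncard_pos (Set.toFinite _)).mpr ⟨u, self_mem_compAway v u⟩
      omega
    | succ m ih =>
      intro v u h hm hback
      by_cases hfwd : ∃ w, T.Adj u w ∧ w ≠ v ∧ n - k + 1 ≤ (ω ⁻¹' compAway T u w).ncard
      · obtain ⟨w, haw, hwv, hbig⟩ := hfwd
        refine ih u w haw ?_ ?_
        · have hss : compAway T u w ⊂ compAway T v u := by
            constructor
            · exact compAway_subset hT.2 h haw hwv
            · intro hsub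
              exact (not_mem_compAway hT.2 haw) (hsub (self_mem_compAway v u))
          have := Set.ncard_lt_ncard hss (Set.toFinite _)
          omega
        · have h1 := (hAc u w haw).1
          have h2 := (hAc u w haw).2
          omega
      · push_neg at hfwd
        refine ⟨u, ?_⟩
        have hv : v ∈ nbrFinset T u := (hnbr u v).mpr h.symm
        have hsum : ∑ x ∈ nbrFinset T u, shortDim C (ω ⁻¹' compAway T u x)
            = shortDim C (ω ⁻¹' compAway T u v) := by
          apply Finset.sum_eq_single_of_mem v hv
          intro x hx hxv
          rw [hsd]
          have := hfwd x ((hnbr u x).mp hx) hxv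
          omega
        simp only [kappaNode]
        rw [hsum, hk, hsd]
        omega
  obtain ⟨v0⟩ := hT.1.nonempty
  by_cases hst : ∃ u, T.Adj v0 u ∧ n - k + 1 ≤ (ω ⁻¹' compAway T v0 u).ncard
  · obtain ⟨u, hadj, hbig⟩ := hst
    refine step ((compAway T v0 u).ncard) v0 u hadj le_rfl ?_
    have h1 := (hAc v0 u hadj).1
    have h2 := (hAc v0 u hadj).2
    omega
  · push_neg at hst
    refine ⟨v0, ?_⟩
    have hsum : ∑ x ∈ nbrFinset T v0, shortDim C (ω ⁻¹' compAway T v0 x) = 0 := by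
      apply Finset.sum_eq_zero
      intro x hx
      rw [hsd]
      have := hst x ((hnbr v0 x).mp hx)
      omega
    simp only [kappaNode]
    rw [hsum, hk]
    omega

end Walk

section Path
open SimpleGraph

variable {n : ℕ}

lemma pg_cut {a b : Fin n} (hab : a.val + 1 = b.val) :
    ∀ {x y : Fin n}, ((pathGraph n).deleteEdges {s(a, b)}).Walk x y →
      (x.val ≤ a.val ↔ y.val ≤ a.val) := by
  intro x y p
  induction p with
  | nil => exact Iff.rfl
  | @cons x z y h p ih =>
    rw [deleteEdges_adj] at h
    obtain ⟨hadj, hne⟩ := h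
    rw [pathGraph_adj] at hadj
    simp only [Set.mem_singleton_iff] at hne
    have hne' : ¬((x = a ∧ z = b) ∨ (x = b ∧ z = a)) := by
      rw [← Sym2.eq_iff]; exact hne
    simp only [Fin.ext_iff, not_or, not_and] at hne'
    rw [← ih]
    omega

lemma pg_connected (hn : 1 ≤ n) : (pathGraph n).Connected := by
  cases n with
  | zero => omega
  | succ m => exact pathGraph_connected m

lemma pg_isTree (hn : 1 ≤ n) : (pathGraph n).IsTree := by
  refine ⟨pg_connected hn, ?_⟩
  rw [isAcyclic_iff_forall_adj_isBridge]
  have hsym : ∀ a b : Fin n, (pathGraph n).Adj a b → a.val + 1 = b.val →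
      (pathGraph n).IsBridge s(a, b) := by
    intro a b hadj h1
    rw [isBridge_iff]
    rintro ⟨p⟩
    have := pg_cut h1 p
    omega
  intro v w hvw
  rcases pathGraph_adj.mp hvw with h1 | h1
  · exact hsym v w hvw h1
  · rw [Sym2.eq_swap]
    exact hsym w v hvw.symm h1

lemma pg_compAway_up {v u : Fin n} (hvu : v.val + 1 = u.val) :
    compAway (pathGraph n) v u = {w | v < w} := by
  apply Set.eq_of_subset_of_subset
  · intro x hx
    obtain ⟨p⟩ := hx
    have := pg_cut hvu p
    simp only [Set.mem_setOf_eq, Fin.lt_def]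
    omega
  · intro x hx
    simp only [Set.mem_setOf_eq, Fin.lt_def] at hx
    have hreach : ∀ (m : ℕ) (x : Fin n), v.val < x.val → x.val ≤ u.val + m →
        ((pathGraph n).deleteEdges {s(v, u)}).Reachable u x := by
      intro m
      induction m with
      | zero =>
        intro x hx1 hx2
        have hxu : x = u := Fin.ext (by omega)
        rw [hxu]
      | succ m ih =>
        intro x hx1 hx2
        by_cases hle : x.val ≤ u.val + m
        · exact ih x hx1 hle
        · have hyy : x.val - 1 < n := by have := x.isLt; omega
          set y : Fin n := ⟨x.val - 1, hyy⟩ with hyd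
          have hyv : y.val = x.val - 1 := rfl
          have h1 : v.val < y.val := by omega
          have hadj : ((pathGraph n).deleteEdges {s(v, u)}).Adj y x := by
            rw [deleteEdges_adj, pathGraph_adj]
            refine ⟨Or.inl (by omega), ?_⟩
            simp only [Set.mem_singleton_iff, Sym2.eq_iff, Fin.ext_iff, not_or, not_and]
            omega
          exact (ih y h1 (by omega)).trans hadj.reachable
    exact hreach n x hx (by have := x.isLt; omega)

lemma pg_compAway_down {v u : Fin n} (huv : u.val + 1 = v.val) :
    compAway (pathGraph n) v u = {w | w < v} := by
  have hswap : ({s(v, u)} : Set (Sym2 (Fin n))) = {s(u, v)} := by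
    rw [Sym2.eq_swap]
  apply Set.eq_of_subset_of_subset
  · intro x hx
    obtain ⟨p⟩ := hx
    rw [hswap] at p
    have := pg_cut huv p
    simp only [Set.mem_setOf_eq, Fin.lt_def]
    omega
  · intro x hx
    simp only [Set.mem_setOf_eq, Fin.lt_def] at hx
    have hreach : ∀ (m : ℕ) (x : Fin n), x.val < v.val → u.val ≤ x.val + m →
        ((pathGraph n).deleteEdges {s(v, u)}).Reachable u x := by
      intro m
      induction m with
      | zero =>
        intro x hx1 hx2
        have hxu : x = u := Fin.ext (by omega)
        rw [hxu]
      | succ m ih =>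
        intro x hx1 hx2
        by_cases hle : u.val ≤ x.val + m
        · exact ih x hx1 hle
        · have hyy : x.val + 1 < n := by have := v.isLt; omega
          set y : Fin n := ⟨x.val + 1, hyy⟩ with hyd
          have hyv : y.val = x.val + 1 := rfl
          have h1 : y.val < v.val := by omega
          have hadj : ((pathGraph n).deleteEdges {s(v, u)}).Adj y x := by
            rw [deleteEdges_adj, pathGraph_adj]
            refine ⟨Or.inr (by omega), ?_⟩
            simp only [Set.mem_singleton_iff, Sym2.eq_iff, Fin.ext_iff, not_or, not_and]
            omega
          exact (ih y h1 (by omega)).trans hadj.reachable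
    exact hreach n x hx (by have := u.isLt; omega)

end Path

section PathBound
open Module SimpleGraph

lemma path_kappa_le {F : Type} [Field F] {n k : ℕ} (C : Submodule F (Fin n → F))
    (hk : finrank F ↥C = k) (h1k : 1 ≤ k) (hkn : k ≤ n)
    (hsd : ∀ J : Set (Fin n), shortDim C J = J.ncard - (n - k)) (v : Fin n) :
    kappaNode C (pathGraph n) (fun i => i) v ≤ min k (n - k + 1) := by
  classical
  have hnbr : ∀ u, u ∈ nbrFinset (pathGraph n) v ↔ (pathGraph n).Adj v u := by
    intro u
    simp [nbrFinset, SimpleGraph.mem_neighborSet]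
  set f : Fin n → ℕ :=
    fun u => shortDim C ((fun i : Fin n => i) ⁻¹' compAway (pathGraph n) v u) with hfd
  have hfnext : ∀ u : Fin n, v.val + 1 = u.val → f u = n - 1 - v.val - (n - k) := by
    intro u hu
    rw [hfd]
    simp only
    rw [pg_compAway_up hu]
    have hpre : (fun i : Fin n => i) ⁻¹' {w | v < w} = {w : Fin n | v < w} := rfl
    rw [hpre, hsd, ncard_gt_fin]
  have hfprev : ∀ u : Fin n, u.val + 1 = v.val → f u = v.val - (n - k) := by
    intro u hu
    rw [hfd]
    simp only
    rw [pg_compAway_down hu]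
    have hpre : (fun i : Fin n => i) ⁻¹' {w | w < v} = {w : Fin n | w < v} := rfl
    rw [hpre, hsd, ncard_lt_fin]
  have hv := v.isLt
  have hgoal : kappaNode C (pathGraph n) (fun i : Fin n => i) v
      = k - ∑ u ∈ nbrFinset (pathGraph n) v, f u := by
    simp only [kappaNode, hk, hfd]
  rw [hgoal]
  by_cases h1 : v.val + 1 < n
  · obtain ⟨u1, hu1v⟩ : ∃ u1 : Fin n, v.val + 1 = u1.val := ⟨⟨v.val + 1, h1⟩, rfl⟩
    have hu1 : u1 ∈ nbrFinset (pathGraph n) v :=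
      (hnbr _).mpr (pathGraph_adj.mpr (Or.inl hu1v))
    have hf1 := hfnext u1 hu1v
    by_cases h0 : 0 < v.val
    · obtain ⟨u0, hu0v⟩ : ∃ u0 : Fin n, u0.val + 1 = v.val :=
        ⟨⟨v.val - 1, by omega⟩, show v.val - 1 + 1 = v.val by omega⟩
      have hu0 : u0 ∈ nbrFinset (pathGraph n) v :=
        (hnbr _).mpr (pathGraph_adj.mpr (Or.inr hu0v))
      have hf0 := hfprev u0 hu0v
      have hne : u0 ≠ u1 := by
        simp only [ne_eq, Fin.ext_iff]
        omega
      have hsub : ({u0, u1} : Finset (Fin n)) ⊆ nbrFinset (pathGraph n) v := by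
        intro x hxmem
        rcases Finset.mem_insert.mp hxmem with rfl | hxx
        · exact hu0
        · rw [Finset.mem_singleton.mp hxx]
          exact hu1
      have hsum : f u0 + f u1 ≤ ∑ u ∈ nbrFinset (pathGraph n) v, f u := by
        rw [← Finset.sum_pair hne]
        exact Finset.sum_le_sum_of_subset hsub
      omega
    · have hsum := Finset.single_le_sum (f := f) (fun a _ => Nat.zero_le (f a)) hu1
      omega
  · by_cases h0 : 0 < v.val
    · obtain ⟨u0, hu0v⟩ : ∃ u0 : Fin n, u0.val + 1 = v.val :=
        ⟨⟨v.val - 1, by omega⟩, show v.val - 1 + 1 = v.val by omega⟩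
      have hu0 : u0 ∈ nbrFinset (pathGraph n) v :=
        (hnbr _).mpr (pathGraph_adj.mpr (Or.inr hu0v))
      have hf0 := hfprev u0 hu0v
      have hsum := Finset.single_le_sum (f := f) (fun a _ => Nat.zero_le (f a)) hu0
      omega
    · omega

end PathBound


open SimpleGraph

/-- for an `(n,k)` MDS code, the treewidth equals the trelliswidth,
and both equal `min {k, n−k+1}`. -/
theorem stmt5 {F : Type} [Field F] [Fintype F] {n k : ℕ}
    (C : Submodule F (Fin n → F)) (hk : finrank F ↥C = k)
    (hmds : minDist C = n - k + 1) :
    treeWidth C = trellisWidth C ∧ trellisWidth C = min k (n - k + 1) := by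
  classical
  have h1k : 1 ≤ k := one_le_k C hk hmds
  have hkn : k ≤ n := k_le_n C hk
  have hw := weight_lb C hmds
  have hsd : ∀ J : Set (Fin n), shortDim C J = J.ncard - (n - k) :=
    fun J => shortDim_eq C hk hkn hw J
  have htr : trellisWidth C = min k (n - k + 1) := trellis_eq C hk h1k hkn hsd
  have hn : 1 ≤ n := le_trans h1k hkn
  have hmem : constraintComplexity C (pathGraph n) (fun i : Fin n => i)
      ∈ {t : ℕ | ∃ (N : ℕ) (T : SimpleGraph (Fin N)) (ω : Fin n → Fin N),
        T.IsTree ∧ t = constraintComplexity C T ω} :=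
    ⟨n, pathGraph n, fun i => i, pg_isTree hn, rfl⟩
  have hle : treeWidth C ≤ min k (n - k + 1) := by
    unfold treeWidth
    refine le_trans (Nat.sInf_le hmem) ?_
    unfold constraintComplexity
    apply Finset.sup_le
    intro v _
    exact path_kappa_le C hk h1k hkn hsd v
  have hge : min k (n - k + 1) ≤ treeWidth C := by
    unfold treeWidth
    apply le_csInf ⟨_, hmem⟩
    rintro t ⟨N, T, ω, hT, rfl⟩
    obtain ⟨x, hx⟩ := exists_good C hT ω hk h1k hkn hsd
    refine le_trans hx ?_
    unfold constraintComplexity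
    exact Finset.le_sup (Finset.mem_univ x)
  refine ⟨?_, htr⟩
  rw [htr]
  omega
end

section
/- Let m ≥ 2 and r ≤ m with m < 2r. Then U_{α^(m)}(RM(r,m)) = Σ_{i=0}^{(m−1)/2} k(r−1−i, m−1−2i) if m is odd and Σ_{i=0}^{(m−2)/2} k(r−1−i, m−1−2i) if m is even; and U_{β^(m)}(RM(r,m)) = Σ_{i=1}^{(m−1)/2} k(r−1−i, m−2i) if m is odd and Σ_{i=1}^{m/2} k(r−1−i, m−2i) if m is even. -/
open Module

/-- Support of a subcode. -/
def chi {F : Type} [Field F] {n : ℕ} (D : Submodule F (Fin n → F)) : Set (Fin n) :=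
  {i | ∃ c ∈ D, c i ≠ 0}

/-- `Ucap C s`: maximal dimension of a subcode of `C` whose support has size at most `s`. -/
noncomputable def Ucap {F : Type} [Field F] {n : ℕ}
    (C : Submodule F (Fin n → F)) (s : ℕ) : ℕ :=
  sSup {d : ℕ | ∃ D : Submodule F (Fin n → F), D ≤ C ∧ (chi D).ncard ≤ s ∧ finrank F ↥D = d}

/-- The binary Reed–Muller code `RM(r,m)`: the evaluation vectors, at the points of
`{0,1}^m` listed in the standard bit order, of the `m`-variable polynomials over `F₂`
of total degree at most `r`. -/
def RMcode (r m : ℕ) : Submodule (ZMod 2) (Fin (2 ^ m) → ZMod 2) :=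
  Submodule.span (ZMod 2)
    {w | ∃ f : MvPolynomial (Fin m) (ZMod 2), f.totalDegree ≤ r ∧
      w = fun i => MvPolynomial.eval (fun j : Fin m => if Nat.testBit i.val j.val then 1 else 0) f}

/-- `k(r,m) = ∑_{j=0}^{r} C(m,j)`, the dimension of `RM(r,m)`. -/
def kRM (r m : ℕ) : ℕ := ∑ j ∈ Finset.range (r + 1), Nat.choose m j

/-- `α(m)`: the largest integer not exceeding `(2/3)·2^m`. -/
def alph (m : ℕ) : ℕ := 2 ^ (m + 1) / 3

/-- `β(m)`: the largest integer not exceeding `(1/3)·2^m`. -/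
def bet (m : ℕ) : ℕ := 2 ^ m / 3

open Finset



/-- sum of powers of two over a finset of naturals -/
def eN (T : Finset ℕ) : ℕ := ∑ j ∈ T, 2 ^ j

lemma geomsum (a : ℕ) : ∑ j ∈ Finset.range a, 2 ^ j = 2 ^ a - 1 := by
  induction a with
  | zero => simp
  | succ n ih => rw [Finset.sum_range_succ, ih]; have := Nat.one_le_two_pow (n := n); omega

lemma eN_lt {a : ℕ} {T : Finset ℕ} (h : ∀ j ∈ T, j < a) : eN T < 2 ^ a := by
  have hsub : T ⊆ Finset.range a := fun j hj => Finset.mem_range.2 (h j hj)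
  have h1 : eN T ≤ ∑ j ∈ Finset.range a, 2 ^ j := Finset.sum_le_sum_of_subset hsub
  rw [geomsum] at h1
  have := Nat.one_le_two_pow (n := a)
  omega

lemma testBit_two_pow_add {a x k : ℕ} (hx : x < 2 ^ a) :
    (2 ^ a + x).testBit k = ((k = a) || x.testBit k) := by
  rcases lt_trichotomy k a with h | rfl | h
  · rw [Nat.testBit_two_pow_add_gt h]
    simp [Nat.ne_of_lt h]
  · rw [Nat.testBit_two_pow_add_eq, Nat.testBit_lt_two_pow hx]; simp
  · have h1 : (2 ^ a + x) < 2 ^ k := by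
      have h2 : 2 ^ (a+1) ≤ 2 ^ k := Nat.pow_le_pow_right (by norm_num) h
      have h3 : 2 ^ (a+1) = 2 ^ a + 2 ^ a := by ring
      omega
    rw [Nat.testBit_lt_two_pow h1, Nat.testBit_lt_two_pow (lt_trans hx
      (Nat.pow_lt_pow_right (by norm_num) h))]
    simp; omega

lemma eN_insert {a : ℕ} {T : Finset ℕ} (h : a ∉ T) : eN (insert a T) = 2 ^ a + eN T := by
  rw [eN, Finset.sum_insert h]; rfl

lemma testBit_eN {T : Finset ℕ} {k : ℕ} : (eN T).testBit k = (k ∈ T) := by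
  classical
  induction T using Finset.strongInduction with
  | _ T ih =>
    rcases T.eq_empty_or_nonempty with rfl | hne
    · simp [eN, Nat.zero_testBit]
    · have haT : T.max' hne ∈ T := T.max'_mem hne
      set a := T.max' hne with ha
      have herase : ∀ j ∈ T.erase a, j < a := by
        intro j hj
        have := T.le_max' j (Finset.mem_of_mem_erase hj)
        have hne' := Finset.ne_of_mem_erase hj
        omega
      have hlt : eN (T.erase a) < 2 ^ a := eN_lt herase
      have heq : eN T = 2 ^ a + eN (T.erase a) := by
        conv_lhs => rw [← Finset.insert_erase haT]
        rw [eN_insert (Finset.notMem_erase a T)]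
      rw [heq, testBit_two_pow_add hlt]
      have ihe := ih (T.erase a) (Finset.erase_ssubset haT)
      by_cases hk : k = a
      · subst hk; simp [haT]
      · simp only [hk, decide_false, Bool.false_or, ihe, eq_iff_iff]
        exact ⟨fun h => Finset.mem_of_mem_erase h, fun h => Finset.mem_erase.2 ⟨hk, h⟩⟩

lemma eN_bits {m : ℕ} (x : ℕ) (hx : x < 2 ^ m) :
    eN ((Finset.range m).filter (fun j => x.testBit j)) = x := by
  induction m generalizing x with
  | zero => interval_cases x; simp [eN]
  | succ m ih =>
    rcases lt_or_ge x (2 ^ m) with h | h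
    · have he : (Finset.range (m+1)).filter (fun j => x.testBit j)
          = (Finset.range m).filter (fun j => x.testBit j) := by
        rw [Finset.range_add_one, Finset.filter_insert, Nat.testBit_lt_two_pow h]
        simp
      rw [he, ih x h]
    · have hx' : x - 2 ^ m < 2 ^ m := by
        have h2 : 2 ^ (m+1) = 2^m + 2^m := by ring
        omega
      have hbits : ∀ k, x.testBit k = ((k = m) || (x - 2^m).testBit k) := by
        intro k
        have : x = 2 ^ m + (x - 2 ^ m) := by omega
        conv_lhs => rw [this]
        exact testBit_two_pow_add hx'
      have hm : ¬ (x - 2^m).testBit m := by simp [Nat.testBit_lt_two_pow hx']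
      have hfil : (Finset.range (m+1)).filter (fun j => x.testBit j)
          = insert m ((Finset.range m).filter (fun j => (x - 2^m).testBit j)) := by
        ext j
        simp only [Finset.mem_filter, Finset.mem_range, Finset.mem_insert]
        rw [hbits j]
        by_cases hj : j = m
        · subst hj; simp
        · simp only [hj, decide_false, Bool.false_or, false_or]
          constructor
          · rintro ⟨h1, h2⟩; exact ⟨by omega, h2⟩
          · rintro ⟨h1, h2⟩; exact ⟨by omega, h2⟩
      rw [hfil, eN_insert (by simp), ih _ hx']
      omega


/-- value of a subset of `Fin m` as a binary mask -/
def eS {m : ℕ} (S : Finset (Fin m)) : ℕ := ∑ j ∈ S, 2 ^ (j : ℕ)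

lemma eS_lt {m : ℕ} (S : Finset (Fin m)) : eS S < 2 ^ m := by
  have : eS S = eN (S.image Fin.val) := by
    rw [eN, Finset.sum_image (by intro a _ b _ h; exact Fin.val_injective h)]
    rfl
  rw [this]
  exact eN_lt (by intro j hj; rcases Finset.mem_image.1 hj with ⟨a, _, rfl⟩; exact a.isLt)

/-- the counting function: number of `S ⊆ Fin m` with `|S| ≤ r` and `eS S ≥ 2^m - s` -/
def Fcnt (r m s : ℕ) : ℕ :=
  ((univ : Finset (Finset (Fin m))).filter (fun S => S.card ≤ r ∧ 2 ^ m ≤ eS S + s)).card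

lemma Fcnt_mono_s {r m : ℕ} {s s' : ℕ} (h : s ≤ s') : Fcnt r m s ≤ Fcnt r m s' := by
  apply Finset.card_le_card
  intro S hS
  simp only [Finset.mem_filter] at hS ⊢
  exact ⟨hS.1, hS.2.1, by omega⟩

lemma Fcnt_mono_r {r r' m s : ℕ} (h : r ≤ r') : Fcnt r m s ≤ Fcnt r' m s := by
  apply Finset.card_le_card
  intro S hS
  simp only [Finset.mem_filter] at hS ⊢
  exact ⟨hS.1, by omega, hS.2.2⟩

lemma Fcnt_zero {r m : ℕ} : Fcnt r m 0 = 0 := by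
  rw [Fcnt, Finset.filter_false_of_mem, Finset.card_empty]
  intro S _
  have := eS_lt S
  rintro ⟨-, h⟩
  omega

lemma Fcnt_clamp {r m s : ℕ} (h : 2 ^ m ≤ s) : Fcnt r m s = Fcnt r m (2 ^ m) := by
  rw [Fcnt, Fcnt]
  congr 1
  apply Finset.filter_congr
  intro S _
  constructor
  · rintro ⟨h1, -⟩; exact ⟨h1, by omega⟩
  · rintro ⟨h1, -⟩; exact ⟨h1, by omega⟩

lemma Fcnt_zero_r {m s : ℕ} : Fcnt 0 m s = if 2 ^ m ≤ s then 1 else 0 := by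
  rw [Fcnt]
  split_ifs with h
  · have : ((univ : Finset (Finset (Fin m))).filter (fun S => S.card ≤ 0 ∧ 2 ^ m ≤ eS S + s))
        = {∅} := by
      ext S
      simp only [Finset.mem_filter, Finset.mem_univ, true_and, Finset.mem_singleton,
        Nat.le_zero, Finset.card_eq_zero]
      constructor
      · rintro ⟨h1, -⟩; exact h1
      · rintro rfl; exact ⟨rfl, by omega⟩
    rw [this]; rfl
  · rw [Finset.filter_false_of_mem, Finset.card_empty]
    intro S _
    rintro ⟨h1, h2⟩
    rw [Nat.le_zero, Finset.card_eq_zero] at h1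
    subst h1
    simp [eS] at h2
    omega

lemma Fcnt_strict {r m s : ℕ} (h : s < 2 ^ m) : Fcnt r m s < Fcnt r m (2 ^ m) := by
  apply Finset.card_lt_card
  have hsub : ((univ : Finset (Finset (Fin m))).filter (fun S => S.card ≤ r ∧ 2 ^ m ≤ eS S + s))
      ⊆ ((univ : Finset (Finset (Fin m))).filter (fun S => S.card ≤ r ∧ 2 ^ m ≤ eS S + 2 ^ m)) := by
    intro S hS
    simp only [Finset.mem_filter] at hS ⊢
    exact ⟨hS.1, hS.2.1, by omega⟩
  rw [Finset.ssubset_iff_of_subset hsub]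
  refine ⟨∅, ?_, ?_⟩
  · simp only [Finset.mem_filter, Finset.mem_univ, true_and]
    exact ⟨by simp, by simp [eS]⟩
  · simp only [Finset.mem_filter, Finset.mem_univ, true_and, not_and]
    intro _
    simp only [eS, Finset.sum_empty]
    omega

/-- count of subsets with card exactly r and the support condition -/
def Ecnt (r m s : ℕ) : ℕ :=
  ((univ : Finset (Finset (Fin m))).filter (fun S => S.card = r ∧ 2 ^ m ≤ eS S + s)).card

lemma Fcnt_succ (r m s : ℕ) : Fcnt (r+1) m s = Fcnt r m s + Ecnt (r+1) m s := by
  classical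
  rw [Fcnt, Fcnt, Ecnt]
  have hcongr : ((univ : Finset (Finset (Fin m))).filter
      (fun S => S.card ≤ r + 1 ∧ 2 ^ m ≤ eS S + s))
      = (univ : Finset (Finset (Fin m))).filter
        (fun S => (S.card ≤ r ∧ 2 ^ m ≤ eS S + s) ∨ (S.card = r + 1 ∧ 2 ^ m ≤ eS S + s)) := by
    apply Finset.filter_congr
    intro S _
    constructor
    · rintro ⟨h1, h2⟩
      rcases Nat.lt_succ_iff_lt_or_eq.1 (Nat.lt_succ_of_le h1) with h | h
      · exact Or.inl ⟨by omega, h2⟩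
      · exact Or.inr ⟨h, h2⟩
    · rintro (⟨h1, h2⟩ | ⟨h1, h2⟩) <;> exact ⟨by omega, h2⟩
  rw [hcongr, Finset.filter_or]
  apply Finset.card_union_of_disjoint
  rw [Finset.disjoint_filter]
  rintro S _ ⟨h1, -⟩ ⟨h2, -⟩
  omega

lemma Ecnt_mono_s {r m : ℕ} {s s' : ℕ} (h : s ≤ s') : Ecnt r m s ≤ Ecnt r m s' := by
  apply Finset.card_le_card
  intro S hS
  simp only [Finset.mem_filter] at hS ⊢
  exact ⟨hS.1, hS.2.1, by omega⟩

lemma Fcnt_delta {r m : ℕ} {w w' : ℕ} (h : w ≤ w') :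
    Fcnt (r+1) m w + Fcnt r m w' ≤ Fcnt r m w + Fcnt (r+1) m w' := by
  rw [Fcnt_succ, Fcnt_succ]
  have := Ecnt_mono_s (r := r+1) (m := m) h
  omega

section lift
variable {m : ℕ}

def liftF : Fin m ↪ Fin (m+1) := ⟨Fin.castSucc, Fin.castSucc_injective m⟩

def liftS (S : Finset (Fin m)) : Finset (Fin (m+1)) := S.map liftF

def dropS (S : Finset (Fin (m+1))) : Finset (Fin m) :=
  univ.filter (fun j => j.castSucc ∈ S)

lemma mem_dropS {S : Finset (Fin (m+1))} {j : Fin m} : j ∈ dropS S ↔ j.castSucc ∈ S := by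
  simp [dropS]

lemma last_not_mem_liftS (S : Finset (Fin m)) : Fin.last m ∉ liftS S := by
  rw [liftS, Finset.mem_map]
  rintro ⟨a, -, ha⟩
  exact absurd (congrArg Fin.val ha) (by simp [liftF, Fin.castSucc]; omega)

lemma mem_liftS {S : Finset (Fin m)} {j : Fin m} : j.castSucc ∈ liftS S ↔ j ∈ S := by
  rw [liftS, Finset.mem_map]
  constructor
  · rintro ⟨a, ha, h⟩
    have : a = j := Fin.castSucc_injective m h
    subst this; exact ha
  · intro h; exact ⟨j, h, rfl⟩

lemma dropS_liftS (S : Finset (Fin m)) : dropS (liftS S) = S := by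
  ext j; rw [mem_dropS, mem_liftS]

lemma liftS_dropS {S : Finset (Fin (m+1))} (h : Fin.last m ∉ S) : liftS (dropS S) = S := by
  ext j
  induction j using Fin.lastCases with
  | last => simp [last_not_mem_liftS, h]
  | cast j => rw [mem_liftS, mem_dropS]

lemma card_liftS (S : Finset (Fin m)) : (liftS S).card = S.card := Finset.card_map _

lemma eS_liftS (S : Finset (Fin m)) : eS (liftS S) = eS S := by
  rw [eS, liftS, Finset.sum_map]
  rfl

lemma eS_insert_last {S : Finset (Fin (m+1))} (h : Fin.last m ∉ S) :
    eS (insert (Fin.last m) S) = 2 ^ m + eS S := by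
  rw [eS, Finset.sum_insert h, Fin.val_last]
  rfl

lemma dropS_insert_last (S : Finset (Fin (m+1))) : dropS (insert (Fin.last m) S) = dropS S := by
  ext j
  rw [mem_dropS, mem_dropS, Finset.mem_insert]
  have : j.castSucc ≠ Fin.last m := by
    intro h; exact absurd (congrArg Fin.val h) (by simp [Fin.castSucc]; omega)
  simp [this]

lemma eq_insert_last {S : Finset (Fin (m+1))} (h : Fin.last m ∈ S) :
    S = insert (Fin.last m) (liftS (dropS S)) := by
  have h1 : liftS (dropS (S.erase (Fin.last m))) = S.erase (Fin.last m) :=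
    liftS_dropS (Finset.notMem_erase _ _)
  have h2 : dropS (S.erase (Fin.last m)) = dropS S := by
    ext j
    rw [mem_dropS, mem_dropS, Finset.mem_erase]
    have : j.castSucc ≠ Fin.last m := by
      intro hh; exact absurd (congrArg Fin.val hh) (by simp [Fin.castSucc]; omega)
    simp [this]
  rw [← h2, h1, Finset.insert_erase h]

end lift

lemma two_pow_succ' (m : ℕ) : 2 ^ (m+1) = 2 ^ m + 2 ^ m := by ring

/-- the fundamental recursion for Fcnt -/
lemma Fcnt_rec (r m s : ℕ) :
    Fcnt (r+1) (m+1) s = Fcnt r m s + Fcnt (r+1) m (s - 2 ^ m) := by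
  classical
  rw [Fcnt]
  rw [← Finset.card_filter_add_card_filter_not
    (p := fun S : Finset (Fin (m+1)) => Fin.last m ∈ S)
    (s := (univ : Finset (Finset (Fin (m+1)))).filter
      (fun S => S.card ≤ r + 1 ∧ 2 ^ (m+1) ≤ eS S + s))]
  rw [Finset.filter_filter, Finset.filter_filter]
  congr 1
  · -- sets containing the top bit ↔ Fcnt r m s
    rw [Fcnt]
    apply Finset.card_bij' (i := fun S _ => dropS S)
      (j := fun S' _ => insert (Fin.last m) (liftS S'))
    · intro S hS
      simp only [Finset.mem_filter, Finset.mem_univ, true_and] at hS ⊢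
      obtain ⟨⟨hc, he⟩, hl⟩ := hS
      have hSeq := eq_insert_last hl
      have h1 : S.card = (dropS S).card + 1 := by
        conv_lhs => rw [hSeq]
        rw [Finset.card_insert_of_notMem (last_not_mem_liftS _), card_liftS]
      have h2 : eS S = 2 ^ m + eS (dropS S) := by
        conv_lhs => rw [hSeq]
        rw [eS_insert_last (last_not_mem_liftS _), eS_liftS]
      have hp := two_pow_succ' m
      exact ⟨by omega, by omega⟩
    · intro S' hS'
      simp only [Finset.mem_filter, Finset.mem_univ, true_and] at hS' ⊢
      obtain ⟨hc, he⟩ := hS'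
      have h1 : (insert (Fin.last m) (liftS S')).card = S'.card + 1 := by
        rw [Finset.card_insert_of_notMem (last_not_mem_liftS _), card_liftS]
      have h2 : eS (insert (Fin.last m) (liftS S')) = 2 ^ m + eS S' := by
        rw [eS_insert_last (last_not_mem_liftS _), eS_liftS]
      have hp := two_pow_succ' m
      exact ⟨⟨by omega, by omega⟩, Finset.mem_insert_self _ _⟩
    · intro S hS
      simp only [Finset.mem_filter, Finset.mem_univ, true_and] at hS
      exact (eq_insert_last hS.2).symm
    · intro S' _
      rw [dropS_insert_last, dropS_liftS]
  · -- sets avoiding the top bit ↔ Fcnt (r+1) m (s - 2^m)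
    rw [Fcnt]
    apply Finset.card_bij' (i := fun S _ => dropS S) (j := fun S' _ => liftS S')
    · intro S hS
      simp only [Finset.mem_filter, Finset.mem_univ, true_and] at hS ⊢
      obtain ⟨⟨hc, he⟩, hl⟩ := hS
      have hSeq := (liftS_dropS hl).symm
      have h1 : S.card = (dropS S).card := by
        conv_lhs => rw [hSeq]
        rw [card_liftS]
      have h2 : eS S = eS (dropS S) := by
        conv_lhs => rw [hSeq]
        rw [eS_liftS]
      have hp := two_pow_succ' m
      have hlt := eS_lt (dropS S)
      exact ⟨by omega, by omega⟩
    · intro S' hS'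
      simp only [Finset.mem_filter, Finset.mem_univ, true_and] at hS' ⊢
      obtain ⟨hc, he⟩ := hS'
      have hp := two_pow_succ' m
      have hlt := eS_lt S'
      rw [card_liftS, eS_liftS]
      exact ⟨⟨by omega, by omega⟩, last_not_mem_liftS _⟩
    · intro S hS
      simp only [Finset.mem_filter, Finset.mem_univ, true_and] at hS
      exact liftS_dropS hS.2
    · intro S' _
      exact dropS_liftS S'

/-- Fcnt at full s equals kRM-count of low-weight subsets -/
lemma Fcnt_full (r m : ℕ) :
    Fcnt r m (2 ^ m) = ∑ j ∈ Finset.range (r + 1), Nat.choose m j := by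
  rw [Fcnt]
  have h1 : ((univ : Finset (Finset (Fin m))).filter
      (fun S => S.card ≤ r ∧ 2 ^ m ≤ eS S + 2 ^ m))
      = (univ : Finset (Finset (Fin m))).filter (fun S => S.card ≤ r) := by
    apply Finset.filter_congr
    intro S _
    constructor
    · rintro ⟨h, -⟩; exact h
    · intro h; exact ⟨h, by omega⟩
  rw [h1]
  rw [Finset.card_filter]
  rw [show (fun (S : Finset (Fin m)) => if S.card ≤ r then 1 else 0)
      = (fun S => ∑ j ∈ Finset.range (r+1), if S.card = j then 1 else 0) by
    funext S
    by_cases h : S.card ≤ r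
    · rw [if_pos h, Finset.sum_eq_single_of_mem S.card (Finset.mem_range.2 (by omega))]
      · rw [if_pos rfl]
      · intro j _ hj
        rw [if_neg (fun hh => hj hh.symm)]
    · rw [if_neg h, Finset.sum_eq_zero]
      intro j hj
      simp only [Finset.mem_range] at hj
      rw [if_neg]
      omega]
  rw [Finset.sum_comm]
  apply Finset.sum_congr rfl
  intro j _
  rw [← Finset.card_filter]
  have : (univ : Finset (Finset (Fin m))).filter (fun S => S.card = j)
      = Finset.powersetCard j univ := by
    rw [Finset.powersetCard_eq_filter, Finset.powerset_univ]
  rw [this, Finset.card_powersetCard, Finset.card_univ, Fintype.card_fin]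


lemma Fcnt_fin0 (r s : ℕ) : Fcnt r 0 s = if 1 ≤ s then 1 else 0 := by
  rw [Fcnt]
  have hu : (univ : Finset (Finset (Fin 0))) = {∅} := by decide
  rw [hu, Finset.filter_singleton]
  have he : eS (∅ : Finset (Fin 0)) = 0 := by simp [eS]
  by_cases h : 1 ≤ s
  · rw [if_pos ⟨by simp, by rw [he]; simpa using h⟩, if_pos h]
    rfl
  · rw [if_neg, if_neg h]
    · rfl
    · rintro ⟨-, hh⟩
      rw [he] at hh
      simp at hh
      omega

lemma SmallF1 {m s : ℕ} (h : 2 * s < 2 ^ m) : Fcnt 1 m s = 0 := by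
  rw [Fcnt, Finset.card_eq_zero, Finset.filter_eq_empty_iff]
  intro S _
  rintro ⟨hc, he⟩
  interval_cases hcc : S.card
  · rw [Finset.card_eq_zero] at hcc
    subst hcc
    simp [eS] at he
    omega
  · rw [Finset.card_eq_one] at hcc
    obtain ⟨j, rfl⟩ := hcc
    rw [eS, Finset.sum_singleton] at he
    have hj : (j : ℕ) + 1 ≤ m := j.isLt
    have : 2 ^ ((j:ℕ)+1) ≤ 2 ^ m := Nat.pow_le_pow_right (by norm_num) hj
    have : 2 * 2 ^ (j:ℕ) ≤ 2 ^ m := by rw [← pow_succ']; exact this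
    omega

lemma count_pow_ge {m t t' : ℕ} (ht : 0 < t) (h : t' ≤ 2 * t) :
    ((univ : Finset (Fin m)).filter (fun (j : Fin m) => t ≤ 2 ^ (j:ℕ))).card
      ≤ 1 + ((univ : Finset (Fin m)).filter (fun (j : Fin m) => t' ≤ 2 ^ (j:ℕ))).card := by
  have h1 : ((univ : Finset (Fin m)).filter (fun (j : Fin m) => t ≤ 2 ^ (j:ℕ))).card
      ≤ (((univ : Finset (Fin m)).filter (fun (j : Fin m) => t ≤ 2 ^ (j:ℕ)))
          \ ((univ : Finset (Fin m)).filter (fun (j : Fin m) => t' ≤ 2 ^ (j:ℕ)))).card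
        + ((univ : Finset (Fin m)).filter (fun (j : Fin m) => t' ≤ 2 ^ (j:ℕ))).card :=
    Finset.card_le_card_sdiff_add_card
  have h2 : (((univ : Finset (Fin m)).filter (fun (j : Fin m) => t ≤ 2 ^ (j:ℕ)))
          \ ((univ : Finset (Fin m)).filter (fun (j : Fin m) => t' ≤ 2 ^ (j:ℕ)))).card ≤ 1 := by
    rw [Finset.card_le_one]
    intro j hj k hk
    rw [Finset.mem_sdiff, Finset.mem_filter, Finset.mem_filter] at hj hk
    have hj1 : t ≤ 2 ^ (j:ℕ) := hj.1.2
    have hj2 : 2 ^ (j:ℕ) < t' := by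
      have := hj.2
      by_contra hc
      exact this ⟨Finset.mem_univ _, by omega⟩
    have hk1 : t ≤ 2 ^ (k:ℕ) := hk.1.2
    have hk2 : 2 ^ (k:ℕ) < t' := by
      have := hk.2
      by_contra hc
      exact this ⟨Finset.mem_univ _, by omega⟩
    have hjk : 2 ^ (k:ℕ) < 2 ^ ((j:ℕ)+1) := by
      rw [pow_succ]
      omega
    have hkj : 2 ^ (j:ℕ) < 2 ^ ((k:ℕ)+1) := by
      rw [pow_succ]
      omega
    have e1 : (k:ℕ) < (j:ℕ)+1 := by
      by_contra hc
      exact absurd (Nat.pow_le_pow_right (show 1 ≤ 2 by norm_num) (not_lt.1 hc)) (not_le.2 hjk)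
    have e2 : (j:ℕ) < (k:ℕ)+1 := by
      by_contra hc
      exact absurd (Nat.pow_le_pow_right (show 1 ≤ 2 by norm_num) (not_lt.1 hc)) (not_le.2 hkj)
    exact Fin.ext (by omega)
  omega

lemma Ecnt_one (m s : ℕ) :
    Ecnt 1 m s = ((univ : Finset (Fin m)).filter (fun (j : Fin m) => 2 ^ m ≤ 2 ^ (j:ℕ) + s)).card := by
  rw [Ecnt]
  symm
  apply Finset.card_bij (i := fun j _ => ({j} : Finset (Fin m)))
  · intro j hj
    simp only [Finset.mem_filter, Finset.mem_univ, true_and] at hj ⊢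
    refine ⟨Finset.card_singleton j, ?_⟩
    rw [eS, Finset.sum_singleton]
    exact hj
  · intro j _ k _ h
    exact Finset.singleton_injective h
  · intro S hS
    simp only [Finset.mem_filter, Finset.mem_univ, true_and] at hS
    obtain ⟨hc, he⟩ := hS
    rw [Finset.card_eq_one] at hc
    obtain ⟨j, rfl⟩ := hc
    refine ⟨j, ?_, rfl⟩
    simp only [Finset.mem_filter, Finset.mem_univ, true_and]
    rw [eS, Finset.sum_singleton] at he
    exact he

lemma Fcnt_one (m s : ℕ) :
    Fcnt 1 m s = (if 2 ^ m ≤ s then 1 else 0)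
      + ((univ : Finset (Fin m)).filter (fun (j : Fin m) => 2 ^ m ≤ 2 ^ (j:ℕ) + s)).card := by
  rw [show (1:ℕ) = 0 + 1 from rfl, Fcnt_succ, Fcnt_zero_r, Ecnt_one]

/-- the key window inequality for degree ≤ 1 counts -/
lemma F1_window {m u v : ℕ} (huv : u ≤ v) (hv : v ≤ 2 ^ m) (hn : 2 ^ m ≤ u + v) :
    Fcnt 1 m u ≤ 1 + Fcnt 1 m (u + v - 2 ^ m) := by
  rcases eq_or_lt_of_le (le_trans huv hv) with he | hu
  · -- u = 2^m, so v = 2^m and u+v-2^m = 2^m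
    have hv2 : v = 2 ^ m := le_antisymm hv (he ▸ huv)
    rw [hv2, ← he, show u + u - u = u from by omega]
    omega
  · set w := u + v - 2 ^ m with hw
    have hwu : w ≤ u := by omega
    have hwlt : w < 2 ^ m := by omega
    rw [Fcnt_one, Fcnt_one]
    rw [if_neg (by omega), if_neg (by omega)]
    have := count_pow_ge (m := m) (t := 2^m - u) (t' := 2^m - w) (by omega) (by omega)
    have hc1 : ((univ : Finset (Fin m)).filter (fun (j : Fin m) => 2 ^ m ≤ 2 ^ (j:ℕ) + u))
        = ((univ : Finset (Fin m)).filter (fun (j : Fin m) => 2^m - u ≤ 2 ^ (j:ℕ))) := by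
      apply Finset.filter_congr
      intro j _
      omega
    have hc2 : ((univ : Finset (Fin m)).filter (fun (j : Fin m) => 2 ^ m ≤ 2 ^ (j:ℕ) + w))
        = ((univ : Finset (Fin m)).filter (fun (j : Fin m) => 2^m - w ≤ 2 ^ (j:ℕ))) := by
      apply Finset.filter_congr
      intro j _
      omega
    rw [hc1, hc2]
    omega


def CstP (m : ℕ) : Prop := ∀ r x y, x ≤ 2^m → y ≤ 2^m →
  Fcnt r m x + Fcnt r m y ≤ Fcnt r m (min (x+y) (2^m)) + Fcnt r m (x + y - 2^m)

def MPst (m : ℕ) : Prop := ∀ r x y, x ≤ 2^m → y ≤ 2^m →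
  Fcnt (r+1) m x + Fcnt r m y ≤ Fcnt (r+1) m (min (x+y) (2^m)) + Fcnt r m (x + y - 2^m)

def Mst (m : ℕ) : Prop := ∀ r x y, x ≤ y → y ≤ 2^m →
  Fcnt (r+1) m x + Fcnt r m y ≤ Fcnt r m (min (x+y) (2^m)) + Fcnt (r+1) m (x + y - 2^m)

lemma Cst0 : CstP 0 := by
  intro r x y hx hy
  simp only [pow_zero] at *
  simp only [Fcnt_fin0]
  split_ifs <;> omega

lemma MPst0 : MPst 0 := by
  intro r x y hx hy
  simp only [pow_zero] at *
  simp only [Fcnt_fin0]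
  split_ifs <;> omega

lemma Mst0 : Mst 0 := by
  intro r x y hxy hy
  simp only [pow_zero] at *
  simp only [Fcnt_fin0]
  split_ifs <;> omega

lemma Cstep (m : ℕ) (ihC : CstP m) (ihMP : MPst m) : CstP (m+1) := by
  have key : ∀ r x y, x ≤ y → y ≤ 2^(m+1) →
      Fcnt r (m+1) x + Fcnt r (m+1) y ≤
        Fcnt r (m+1) (min (x+y) (2^(m+1))) + Fcnt r (m+1) (x + y - 2^(m+1)) := by
    intro r x y hxy hy
    have hp : 2^(m+1) = 2^m + 2^m := two_pow_succ' m
    match r with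
    | 0 =>
      simp only [Fcnt_zero_r]
      split_ifs <;> omega
    | (r+1) =>
      simp only [Fcnt_rec]
      rcases le_or_gt y (2^m) with hyn | hyn
      · -- A : x ≤ y ≤ n
        rw [show x - 2^m = 0 from by omega, show y - 2^m = 0 from by omega,
          show min (x+y) (2^(m+1)) = x + y from by omega,
          show x + y - 2^(m+1) = 0 from by omega]
        simp only [Nat.zero_sub, Fcnt_zero]
        have hIH := ihC r x y (by omega) (by omega)
        have hcl : Fcnt r m (min (x+y) (2^m)) = Fcnt r m (x+y) := by
          rcases le_or_gt (x+y) (2^m) with h | h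
          · rw [min_eq_left h]
          · rw [min_eq_right (by omega)]
            exact (Fcnt_clamp (by omega)).symm
        have hmr : Fcnt r m (x+y-2^m) ≤ Fcnt (r+1) m (x+y-2^m) := Fcnt_mono_r (by omega)
        omega
      · rcases le_or_gt x (2^m) with hxn | hxn
        · -- B : x ≤ n < y
          rw [show x - 2^m = 0 from by omega,
            show Fcnt r m y = Fcnt r m (2^m) from Fcnt_clamp (by omega)]
          simp only [Nat.zero_sub, Fcnt_zero]
          rcases le_or_gt (x+y) (2^(m+1)) with hN | hN
          · -- B1
            rw [show min (x+y) (2^(m+1)) = x + y from by omega,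
              show x + y - 2^(m+1) = 0 from by omega]
            simp only [Nat.zero_sub, Fcnt_zero]
            rw [show Fcnt r m (x+y) = Fcnt r m (2^m) from Fcnt_clamp (by omega)]
            have hIH := ihMP r (y - 2^m) x (by omega) (by omega)
            rw [show y - 2^m + x = x + y - 2^m from by omega,
              show min (x+y-2^m) (2^m) = x+y-2^m from by omega,
              show x+y-2^m-2^m = 0 from by omega, Fcnt_zero] at hIH
            omega
          · -- B2
            rw [show min (x+y) (2^(m+1)) = 2^(m+1) from by omega,
              show Fcnt r m (2^(m+1)) = Fcnt r m (2^m) from Fcnt_clamp (by omega),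
              show (2:ℕ)^(m+1) - 2^m = 2^m from by omega,
              show x+y-2^(m+1)-2^m = 0 from by omega, Fcnt_zero]
            have hIH := ihMP r (y-2^m) x (by omega) (by omega)
            rw [show y - 2^m + x = x + y - 2^m from by omega,
              show min (x+y-2^m) (2^m) = 2^m from by omega,
              show x+y-2^m-2^m = x+y-2^(m+1) from by omega] at hIH
            omega
        · -- C : n < x ≤ y
          rw [show Fcnt r m x = Fcnt r m (2^m) from Fcnt_clamp (by omega),
            show Fcnt r m y = Fcnt r m (2^m) from Fcnt_clamp (by omega),
            show min (x+y) (2^(m+1)) = 2^(m+1) from by omega,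
            show Fcnt r m (2^(m+1)) = Fcnt r m (2^m) from Fcnt_clamp (by omega),
            show (2:ℕ)^(m+1) - 2^m = 2^m from by omega]
          have hIH := ihC (r+1) (x - 2^m) (y - 2^m) (by omega) (by omega)
          have hdel := Fcnt_delta (r := r) (m := m)
            (w := min (x - 2^m + (y - 2^m)) (2^m)) (w' := 2^m) (by omega)
          rcases le_or_gt (x - 2^m + (y - 2^m)) (2^m) with hc | hc
          · rw [min_eq_left hc] at hIH hdel
            rw [show x + y - 2^(m+1) = x - 2^m + (y - 2^m) from by omega]
            omega
          · rw [min_eq_right (le_of_lt hc)] at hIH hdel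
            rw [show Fcnt r m (x+y-2^(m+1)) = Fcnt r m (2^m) from Fcnt_clamp (by omega),
              show x + y - 2^(m+1) - 2^m = x - 2^m + (y - 2^m) - 2^m from by omega]
            omega
  intro r x y hx hy
  rcases le_total x y with h | h
  · exact key r x y h hy
  · have h2 := key r y x h hx
    rw [show y + x = x + y from by omega] at h2
    omega

lemma MPstep (m : ℕ) (ihC : CstP m) (ihMP : MPst m) : MPst (m+1) := by
  intro r x y hx hy
  have hp : 2^(m+1) = 2^m + 2^m := two_pow_succ' m
  match r with
  | 0 =>
    rcases lt_or_ge y (2^(m+1)) with hyN | hyN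
    · rw [show Fcnt 0 (m+1) y = 0 from by rw [Fcnt_zero_r, if_neg (by omega)]]
      have h1 : Fcnt (0+1) (m+1) x ≤ Fcnt (0+1) (m+1) (min (x+y) (2^(m+1))) :=
        Fcnt_mono_s (by omega)
      omega
    · have hyeq : y = 2^(m+1) := by omega
      subst hyeq
      rw [show min (x + 2^(m+1)) (2^(m+1)) = 2^(m+1) from by omega,
        show x + 2^(m+1) - 2^(m+1) = x from by omega]
      rcases lt_or_ge x (2^(m+1)) with hxN | hxN
      · have h1 : Fcnt (0+1) (m+1) x < Fcnt (0+1) (m+1) (2^(m+1)) := Fcnt_strict hxN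
        simp only [Fcnt_zero_r]
        split_ifs <;> omega
      · have hxeq : x = 2^(m+1) := by omega
        subst hxeq
        omega
  | (r+1) =>
    simp only [Fcnt_rec]
    rcases le_or_gt y (2^m) with hyn | hyn
    · rcases le_or_gt x (2^m) with hxn | hxn
      · -- A : x, y ≤ n
        rw [show x - 2^m = 0 from by omega, show y - 2^m = 0 from by omega,
          show min (x+y) (2^(m+1)) = x + y from by omega,
          show x + y - 2^(m+1) = 0 from by omega]
        simp only [Nat.zero_sub, Fcnt_zero]
        rcases le_or_gt (x+y) (2^m) with hc | hc
        · -- A1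
          have hIH := ihMP r x y (by omega) (by omega)
          rw [min_eq_left hc, show x + y - 2^m = 0 from by omega, Fcnt_zero] at hIH
          omega
        · -- A2
          have hIH := ihMP r x y (by omega) (by omega)
          rw [min_eq_right (by omega)] at hIH
          rw [show Fcnt (r+1) m (x+y) = Fcnt (r+1) m (2^m) from Fcnt_clamp (by omega)]
          have hmr : Fcnt r m (x+y-2^m) ≤ Fcnt (r+1+1) m (x+y-2^m) := Fcnt_mono_r (by omega)
          omega
      · -- C : y ≤ n < x
        rw [show y - 2^m = 0 from by omega,
          show Fcnt (r+1) m x = Fcnt (r+1) m (2^m) from Fcnt_clamp (by omega)]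
        simp only [Nat.zero_sub, Fcnt_zero]
        rcases le_or_gt (x+y) (2^(m+1)) with hN | hN
        · -- C1
          rw [show min (x+y) (2^(m+1)) = x + y from by omega,
            show x + y - 2^(m+1) = 0 from by omega]
          simp only [Nat.zero_sub, Fcnt_zero]
          rw [show Fcnt (r+1) m (x+y) = Fcnt (r+1) m (2^m) from Fcnt_clamp (by omega)]
          have hmono : Fcnt r m y ≤ Fcnt (r+1) m y := Fcnt_mono_r (by omega)
          have hIH := ihMP (r+1) (x - 2^m) y (by omega) (by omega)
          rw [show x - 2^m + y = x + y - 2^m from by omega,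
            show min (x+y-2^m) (2^m) = x+y-2^m from by omega,
            show x+y-2^m-2^m = 0 from by omega, Fcnt_zero] at hIH
          omega
        · -- C2
          rw [show min (x+y) (2^(m+1)) = 2^(m+1) from by omega,
            show Fcnt (r+1) m (2^(m+1)) = Fcnt (r+1) m (2^m) from Fcnt_clamp (by omega),
            show (2:ℕ)^(m+1) - 2^m = 2^m from by omega,
            show x+y-2^(m+1)-2^m = 0 from by omega, Fcnt_zero]
          have hmono : Fcnt r m y ≤ Fcnt (r+1) m y := Fcnt_mono_r (by omega)
          have hIH := ihMP (r+1) (x - 2^m) y (by omega) (by omega)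
          rw [show x - 2^m + y = x + y - 2^m from by omega,
            show min (x+y-2^m) (2^m) = 2^m from by omega,
            show x+y-2^m-2^m = x+y-2^(m+1) from by omega] at hIH
          have hdel := Fcnt_delta (r := r) (m := m)
            (w := x+y-2^(m+1)) (w' := y) (by omega)
          omega
    · rcases le_or_gt x (2^m) with hxn | hxn
      · -- B : x ≤ n < y
        rw [show x - 2^m = 0 from by omega,
          show Fcnt r m y = Fcnt r m (2^m) from Fcnt_clamp (by omega)]
        simp only [Nat.zero_sub, Fcnt_zero]
        rcases le_or_gt (x+y) (2^(m+1)) with hN | hN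
        · -- B1
          rw [show min (x+y) (2^(m+1)) = x + y from by omega,
            show x + y - 2^(m+1) = 0 from by omega]
          simp only [Nat.zero_sub, Fcnt_zero]
          rw [show Fcnt (r+1) m (x+y) = Fcnt (r+1) m (2^m) from Fcnt_clamp (by omega)]
          have hIH := ihC (r+1) x (y - 2^m) (by omega) (by omega)
          rw [show x + (y - 2^m) = x + y - 2^m from by omega,
            show min (x+y-2^m) (2^m) = x+y-2^m from by omega,
            show x+y-2^m-2^m = 0 from by omega, Fcnt_zero] at hIH
          have h1 : Fcnt r m (2^m) ≤ Fcnt (r+1) m (2^m) := Fcnt_mono_r (by omega)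
          have h2 : Fcnt (r+1) m (x+y-2^m) ≤ Fcnt (r+1+1) m (x+y-2^m) := Fcnt_mono_r (by omega)
          omega
        · -- B2
          rw [show min (x+y) (2^(m+1)) = 2^(m+1) from by omega,
            show Fcnt (r+1) m (2^(m+1)) = Fcnt (r+1) m (2^m) from Fcnt_clamp (by omega),
            show (2:ℕ)^(m+1) - 2^m = 2^m from by omega,
            show x+y-2^(m+1)-2^m = 0 from by omega, Fcnt_zero]
          have hIH := ihC (r+1) x (y - 2^m) (by omega) (by omega)
          rw [show x + (y - 2^m) = x + y - 2^m from by omega,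
            show min (x+y-2^m) (2^m) = 2^m from by omega,
            show x+y-2^m-2^m = x+y-2^(m+1) from by omega] at hIH
          have hdel := Fcnt_delta (r := r) (m := m)
            (w := x+y-2^(m+1)) (w' := 2^m) (by omega)
          have h1 : Fcnt (r+1) m (2^m) ≤ Fcnt (r+1+1) m (2^m) := Fcnt_mono_r (by omega)
          omega
      · -- D : n < x, n < y
        rw [show Fcnt (r+1) m x = Fcnt (r+1) m (2^m) from Fcnt_clamp (by omega),
          show Fcnt r m y = Fcnt r m (2^m) from Fcnt_clamp (by omega),
          show min (x+y) (2^(m+1)) = 2^(m+1) from by omega,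
          show Fcnt (r+1) m (2^(m+1)) = Fcnt (r+1) m (2^m) from Fcnt_clamp (by omega),
          show (2:ℕ)^(m+1) - 2^m = 2^m from by omega,
          show x + y - 2^(m+1) = x - 2^m + (y - 2^m) from by omega]
        have hIH := ihMP (r+1) (x - 2^m) (y - 2^m) (by omega) (by omega)
        have hdel1 := Fcnt_delta (r := r) (m := m)
          (w := min (x - 2^m + (y - 2^m)) (2^m)) (w' := 2^m) (by omega)
        have hdel2 := Fcnt_delta (r := r+1) (m := m)
          (w := min (x - 2^m + (y - 2^m)) (2^m)) (w' := 2^m) (by omega)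
        rcases le_or_gt (x - 2^m + (y - 2^m)) (2^m) with hc | hc
        · rw [min_eq_left hc] at hIH hdel1 hdel2
          omega
        · rw [min_eq_right (le_of_lt hc)] at hIH hdel1 hdel2
          rw [show Fcnt r m (x - 2^m + (y - 2^m)) = Fcnt r m (2^m) from Fcnt_clamp (by omega)]
          omega

lemma Mstep (m : ℕ) (ihC : CstP m) (ihM : Mst m) : Mst (m+1) := by
  intro r x y hxy hy
  have hp : 2^(m+1) = 2^m + 2^m := two_pow_succ' m
  rcases eq_or_lt_of_le hy with hyN | hyN
  · subst hyN
    rw [show min (x + 2^(m+1)) (2^(m+1)) = 2^(m+1) from by omega,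
      show x + 2^(m+1) - 2^(m+1) = x from by omega]
    omega
  · match r with
    | 0 =>
      have rec1 : ∀ s, Fcnt 1 (m+1) s = Fcnt 0 m s + Fcnt 1 m (s - 2^m) :=
        fun s => Fcnt_rec 0 m s
      rw [show Fcnt 0 (m+1) y = 0 from by rw [Fcnt_zero_r, if_neg (by omega)]]
      rcases lt_or_ge x (2^m) with hxn | hxn
      · have h0 : Fcnt 1 (m+1) x = 0 := by
          rw [rec1, Fcnt_zero_r, if_neg (by omega), show x - 2^m = 0 from by omega, Fcnt_zero]
        rw [show (0:ℕ)+1 = 1 from rfl] at *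
        rw [h0]
        omega
      · have hxyN : 2^(m+1) ≤ x + y := by omega
        rw [show (0:ℕ)+1 = 1 from rfl] at *
        rw [show min (x+y) (2^(m+1)) = 2^(m+1) from by omega]
        rw [show Fcnt 0 (m+1) (2^(m+1)) = 1 from by rw [Fcnt_zero_r, if_pos (le_refl _)]]
        rw [rec1 x, rec1 (x + y - 2^(m+1))]
        rw [show Fcnt 0 m x = 1 from by rw [Fcnt_zero_r, if_pos (by omega)]]
        rcases lt_or_ge (x + y - 2^(m+1)) (2^m) with hc | hc
        · rw [show Fcnt 0 m (x + y - 2^(m+1)) = 0 from by rw [Fcnt_zero_r, if_neg (by omega)]]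
          have h1 : Fcnt 1 m (x - 2^m) = 0 := SmallF1 (by omega)
          omega
        · rw [show Fcnt 0 m (x + y - 2^(m+1)) = 1 from by rw [Fcnt_zero_r, if_pos (by omega)]]
          have h1 := F1_window (m := m) (u := x - 2^m) (v := y - 2^m)
            (by omega) (by omega) (by omega)
          rw [show x - 2^m + (y - 2^m) - 2^m = x + y - 2^(m+1) - 2^m from by omega] at h1
          omega
    | (r+1) =>
      simp only [Fcnt_rec]
      rcases le_or_gt y (2^m) with hyn | hyn
      · -- A : x ≤ y ≤ n
        rw [show x - 2^m = 0 from by omega, show y - 2^m = 0 from by omega,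
          show min (x+y) (2^(m+1)) = x + y from by omega,
          show x + y - 2^(m+1) = 0 from by omega]
        simp only [Nat.zero_sub, Fcnt_zero]
        rcases le_or_gt (x+y) (2^m) with hc | hc
        · -- A1
          have hIH := ihM r x y hxy (by omega)
          rw [min_eq_left hc, show x + y - 2^m = 0 from by omega, Fcnt_zero] at hIH
          omega
        · -- A2
          have hIH := ihM r x y hxy (by omega)
          rw [min_eq_right (by omega)] at hIH
          rw [show Fcnt r m (x+y) = Fcnt r m (2^m) from Fcnt_clamp (by omega)]
          omega
      · rcases le_or_gt x (2^m) with hxn | hxn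
        · -- B : x ≤ n < y
          rw [show x - 2^m = 0 from by omega,
            show Fcnt r m y = Fcnt r m (2^m) from Fcnt_clamp (by omega)]
          simp only [Nat.zero_sub, Fcnt_zero]
          rcases le_or_gt (x+y) (2^(m+1)) with hN | hN
          · -- B1
            rw [show min (x+y) (2^(m+1)) = x + y from by omega,
              show x + y - 2^(m+1) = 0 from by omega]
            simp only [Nat.zero_sub, Fcnt_zero]
            rw [show Fcnt r m (x+y) = Fcnt r m (2^m) from Fcnt_clamp (by omega)]
            have hIH := ihC (r+1) x (y - 2^m) (by omega) (by omega)
            rw [show x + (y - 2^m) = x + y - 2^m from by omega,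
              show min (x+y-2^m) (2^m) = x+y-2^m from by omega,
              show x+y-2^m-2^m = 0 from by omega, Fcnt_zero] at hIH
            omega
          · -- B2
            rw [show min (x+y) (2^(m+1)) = 2^(m+1) from by omega,
              show Fcnt r m (2^(m+1)) = Fcnt r m (2^m) from Fcnt_clamp (by omega),
              show (2:ℕ)^(m+1) - 2^m = 2^m from by omega,
              show x+y-2^(m+1)-2^m = 0 from by omega, Fcnt_zero]
            have hIH := ihC (r+1) x (y - 2^m) (by omega) (by omega)
            rw [show x + (y - 2^m) = x + y - 2^m from by omega,
              show min (x+y-2^m) (2^m) = 2^m from by omega,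
              show x+y-2^m-2^m = x+y-2^(m+1) from by omega] at hIH
            omega
        · -- C : n < x ≤ y
          rw [show Fcnt (r+1) m x = Fcnt (r+1) m (2^m) from Fcnt_clamp (by omega),
            show Fcnt r m y = Fcnt r m (2^m) from Fcnt_clamp (by omega),
            show min (x+y) (2^(m+1)) = 2^(m+1) from by omega,
            show Fcnt r m (2^(m+1)) = Fcnt r m (2^m) from Fcnt_clamp (by omega),
            show (2:ℕ)^(m+1) - 2^m = 2^m from by omega,
            show x + y - 2^(m+1) = x - 2^m + (y - 2^m) from by omega]
          have hIH := ihM (r+1) (x - 2^m) (y - 2^m) (by omega) (by omega)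
          rcases le_or_gt (x - 2^m + (y - 2^m)) (2^m) with hc | hc
          · rw [min_eq_left hc] at hIH
            omega
          · rw [min_eq_right (le_of_lt hc)] at hIH
            rw [show Fcnt (r+1) m (x - 2^m + (y - 2^m)) = Fcnt (r+1) m (2^m)
              from Fcnt_clamp (by omega)]
            omega

lemma trio (m : ℕ) : CstP m ∧ MPst m ∧ Mst m := by
  induction m with
  | zero => exact ⟨Cst0, MPst0, Mst0⟩
  | succ m ih =>
    obtain ⟨ihC, ihMP, ihM⟩ := ih
    exact ⟨Cstep m ihC ihMP, MPstep m ihC ihMP, Mstep m ihC ihM⟩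

/-- the main combination inequality used in the upper bound -/
lemma Bmain {m r b a : ℕ} (hba : b ≤ a) (ha : a ≤ 2^m) :
    Fcnt (r+1) m b + Fcnt r m a ≤ Fcnt (r+1) (m+1) (a+b) := by
  have hM := (trio m).2.2 r b a hba ha
  rw [Fcnt_rec]
  rw [show b + a = a + b from by omega] at hM
  rcases le_or_gt (a+b) (2^m) with hc | hc
  · rw [min_eq_left hc] at hM
    have : Fcnt r m (a+b) ≤ Fcnt r m (a+b) := le_refl _
    omega
  · rw [min_eq_right (le_of_lt hc)] at hM
    rw [show Fcnt r m (a+b) = Fcnt r m (2^m) from Fcnt_clamp (by omega)]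
    omega


lemma kRM_zero (r : ℕ) : kRM r 0 = 1 := by
  induction r with
  | zero => rfl
  | succ t ih =>
    rw [kRM, Finset.sum_range_succ, ← kRM, ih, Nat.choose_eq_zero_of_lt (by omega)]

lemma kRM_one {t : ℕ} (h : 1 ≤ t) : kRM t 1 = 2 := by
  induction t with
  | zero => omega
  | succ t ih =>
    rcases Nat.eq_zero_or_pos t with rfl | ht
    · rfl
    · rw [kRM, Finset.sum_range_succ, ← kRM, ih ht, Nat.choose_eq_zero_of_lt (by omega)]

lemma alph_rec (m : ℕ) : alph (m + 2) = 2 ^ (m + 1) + alph m := by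
  have h : 2 ^ (m + 3) = 2 ^ (m+1) + 3 * 2 ^ (m + 1) := by ring
  show 2 ^ (m + 3) / 3 = 2 ^ (m+1) + 2 ^ (m+1) / 3
  rw [h, Nat.add_mul_div_left _ _ (by norm_num)]
  exact Nat.add_comm _ _

lemma alph_lt (m : ℕ) : alph m < 2 ^ m := by
  show 2 ^ (m + 1) / 3 < 2 ^ m
  apply Nat.div_lt_of_lt_mul
  have h : 2 ^ (m+1) = 2 * 2 ^ m := by ring
  have h2 : 1 ≤ 2 ^ m := Nat.one_le_two_pow
  omega

lemma alph_ge (m : ℕ) : 2 ^ m ≤ alph (m + 1) := by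
  rw [alph, Nat.le_div_iff_mul_le (by norm_num)]
  have : 2 ^ (m + 1 + 1) = 4 * 2 ^ m := by ring
  omega

lemma bet_eq_alph (m : ℕ) : bet (m + 1) = alph m := rfl

/-- the α-side right-hand side -/
def RHSa (r m : ℕ) : ℕ :=
  if m % 2 = 1 then
    ∑ i ∈ Finset.range ((m - 1) / 2 + 1), kRM (r - 1 - i) (m - 1 - 2 * i)
  else
    ∑ i ∈ Finset.range ((m - 2) / 2 + 1), kRM (r - 1 - i) (m - 1 - 2 * i)

lemma RHSa_rec {m : ℕ} (r : ℕ) (hm : 1 ≤ m) :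
    RHSa (r + 1) (m + 2) = kRM r (m + 1) + RHSa r m := by
  have hmod : (m + 2) % 2 = m % 2 := by omega
  rcases Nat.mod_two_eq_zero_or_one m with hpar | hpar
  · rw [RHSa, RHSa, hmod, hpar]
    simp only [show ¬ (0 = 1) from by omega, if_false, if_neg (by omega : ¬ m % 2 = 1)]
    have hrange : (m + 2 - 2) / 2 + 1 = ((m - 2) / 2 + 1) + 1 := by omega
    rw [hrange, Finset.sum_range_succ']
    have hsum : ∀ i, kRM (r + 1 - 1 - (i + 1)) (m + 2 - 1 - 2 * (i + 1))
        = kRM (r - 1 - i) (m - 1 - 2 * i) := by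
      intro i
      congr 1 <;> omega
    rw [Finset.sum_congr rfl (fun i _ => hsum i)]
    have hzero : kRM (r + 1 - 1 - 0) (m + 2 - 1 - 2 * 0) = kRM r (m + 1) := by
      congr 1 <;> omega
    rw [hzero]
    omega
  · rw [RHSa, RHSa, hmod, hpar, if_pos rfl, if_pos rfl]
    have hrange : (m + 2 - 1) / 2 + 1 = ((m - 1) / 2 + 1) + 1 := by omega
    rw [hrange, Finset.sum_range_succ']
    have hsum : ∀ i, kRM (r + 1 - 1 - (i + 1)) (m + 2 - 1 - 2 * (i + 1))
        = kRM (r - 1 - i) (m - 1 - 2 * i) := by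
      intro i
      congr 1 <;> omega
    rw [Finset.sum_congr rfl (fun i _ => hsum i)]
    have hzero : kRM (r + 1 - 1 - 0) (m + 2 - 1 - 2 * 0) = kRM r (m + 1) := by
      congr 1 <;> omega
    rw [hzero]
    omega

lemma Fcnt_fin1 {r : ℕ} (hr : 1 ≤ r) : Fcnt r 1 1 = 1 := by
  rw [Fcnt]
  have h1 : ((univ : Finset (Finset (Fin 1))).filter
      (fun S => S.card ≤ r ∧ 2 ^ 1 ≤ eS S + 1))
      = (univ : Finset (Finset (Fin 1))).filter (fun S => 2 ^ 1 ≤ eS S + 1) := by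
    apply Finset.filter_congr
    intro S _
    have : S.card ≤ 1 := le_trans (Finset.card_le_univ S) (by simp)
    constructor
    · rintro ⟨-, h⟩; exact h
    · intro h; exact ⟨by omega, h⟩
  rw [h1]
  decide

lemma Fcnt_fin2 {r : ℕ} (hr : 2 ≤ r) : Fcnt r 2 2 = 2 := by
  rw [Fcnt]
  have h1 : ((univ : Finset (Finset (Fin 2))).filter
      (fun S => S.card ≤ r ∧ 2 ^ 2 ≤ eS S + 2))
      = (univ : Finset (Finset (Fin 2))).filter (fun S => 2 ^ 2 ≤ eS S + 2) := by
    apply Finset.filter_congr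
    intro S _
    have : S.card ≤ 2 := le_trans (Finset.card_le_univ S) (by simp)
    constructor
    · rintro ⟨-, h⟩; exact h
    · intro h; exact ⟨by omega, h⟩
  rw [h1]
  decide

lemma Fcnt_fin2_one : Fcnt 1 2 2 = 1 := by decide

lemma idA : ∀ m r : ℕ, 1 ≤ m → m ≤ 2 * r → Fcnt r m (alph m) = RHSa r m := by
  intro m
  induction m using Nat.strong_induction_on with
  | _ m ih =>
    intro r h1 h2
    match m, h1 with
    | 1, _ =>
      have hr : 1 ≤ r := by omega
      have ha : alph 1 = 1 := by norm_num [alph]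
      rw [ha, Fcnt_fin1 hr, RHSa]
      norm_num
      rw [kRM_zero]
    | 2, _ =>
      have hr : 1 ≤ r := by omega
      have ha : alph 2 = 2 := by norm_num [alph]
      rw [ha, RHSa]
      norm_num
      rcases eq_or_lt_of_le hr with hr1 | hr2
      · rw [← hr1, Fcnt_fin2_one]
        decide
      · rw [Fcnt_fin2 (by omega), kRM_one (by omega)]
    | (m'' + 3), _ =>
      -- write m = m' + 2 with m' = m'' + 1
      have hr : 2 ≤ r := by omega
      obtain ⟨r', rfl⟩ : ∃ r', r = r' + 1 := ⟨r - 1, by omega⟩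
      have key : Fcnt (r' + 1) (m'' + 1 + 2) (alph (m'' + 1 + 2))
          = kRM r' (m'' + 2) + Fcnt r' (m'' + 1) (alph (m'' + 1)) := by
        rw [Fcnt_rec]
        have t1 : Fcnt r' (m'' + 2) (alph (m'' + 1 + 2)) = kRM r' (m'' + 2) := by
          have hge : 2 ^ (m'' + 2) ≤ alph (m'' + 1 + 2) := alph_ge (m'' + 2)
          rw [Fcnt_clamp hge, Fcnt_full]
          rfl
        have t2 : alph (m'' + 1 + 2) - 2 ^ (m'' + 2) = alph (m'' + 1) := by
          rw [alph_rec]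
          have hp2 : (2:ℕ) ^ (m'' + 1 + 1) = 2 ^ (m'' + 2) := by norm_num
          omega
        rw [t1, t2]
        congr 1
        rw [Fcnt_rec]
        have t3 : alph (m'' + 1) - 2 ^ (m'' + 1) = 0 := by
          have := alph_lt (m'' + 1)
          omega
        rw [t3, Fcnt_zero]
        have t4 : Fcnt (r' - 1 + 1) (m'' + 1) (alph (m'' + 1))
            = Fcnt r' (m'' + 1) (alph (m'' + 1)) := by
          congr 1
          omega
        omega
      have hIH := ih (m'' + 1) (by omega) r' (by omega) (by omega)
      have hR := RHSa_rec (m := m'' + 1) r' (by omega)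
      show Fcnt (r' + 1) (m'' + 1 + 2) (alph (m'' + 1 + 2)) = RHSa (r' + 1) (m'' + 1 + 2)
      rw [key, hIH, hR]

lemma idB {m r : ℕ} : Fcnt (r + 1) (m + 1) (bet (m + 1)) = Fcnt r m (alph m) := by
  rw [Fcnt_rec, bet_eq_alph]
  have t3 : alph m - 2 ^ m = 0 := by
    have := alph_lt m
    omega
  rw [t3, Fcnt_zero]
  omega


/-- monomial evaluation vectors -/
def vv {m : ℕ} (S : Finset (Fin m)) : Fin (2 ^ m) → ZMod 2 :=
  fun i => ∏ j ∈ S, (if Nat.testBit i.val j.val then 1 else 0)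

lemma vv_eq_ite {m : ℕ} (S : Finset (Fin m)) (i : Fin (2 ^ m)) :
    vv S i = if (∀ j ∈ S, Nat.testBit i.val j.val) then 1 else 0 := by
  by_cases h : ∀ j ∈ S, Nat.testBit i.val j.val
  · rw [if_pos h, vv, Finset.prod_congr rfl (fun j hj => if_pos (h j hj)), Finset.prod_const_one]
  · push_neg at h
    obtain ⟨j₀, hj₀, hb⟩ := h
    rw [if_neg, vv]
    · exact Finset.prod_eq_zero hj₀ (by rw [if_neg (by simpa using hb)])
    · push_neg
      exact ⟨j₀, hj₀, by simpa using hb⟩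

lemma eS_eq_eN {m : ℕ} (S : Finset (Fin m)) : eS S = eN (S.image Fin.val) := by
  rw [eN, Finset.sum_image (by intro a _ b _ h; exact Fin.val_injective h)]
  rfl

lemma testBit_eS {m : ℕ} (S : Finset (Fin m)) (j : Fin m) :
    Nat.testBit (eS S) (j : ℕ) = (j ∈ S) := by
  rw [eS_eq_eN]
  rw [eq_iff_iff] at *
  rw [show ((eN (S.image Fin.val)).testBit ↑j = true) ↔ ((j:ℕ) ∈ S.image Fin.val) from
    by rw [testBit_eN]]
  constructor
  · intro h
    rcases Finset.mem_image.1 h with ⟨a, ha, hav⟩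
    rwa [← Fin.val_injective hav]
  · intro h
    exact Finset.mem_image.2 ⟨j, h, rfl⟩

/-- nonzero entries of `vv S` live above `eS S` -/
lemma vv_support {m : ℕ} {S : Finset (Fin m)} {i : Fin (2 ^ m)} (h : vv S i ≠ 0) :
    eS S ≤ (i : ℕ) := by
  rw [vv_eq_ite] at h
  by_cases hb : ∀ j ∈ S, Nat.testBit i.val j.val
  · have hval : (i : ℕ) = eN ((Finset.range m).filter (fun j => Nat.testBit i.val j)) :=
      (eN_bits _ i.isLt).symm
    rw [eS_eq_eN, hval]
    apply Finset.sum_le_sum_of_subset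
    intro k hk
    rcases Finset.mem_image.1 hk with ⟨a, ha, rfl⟩
    exact Finset.mem_filter.2 ⟨Finset.mem_range.2 a.isLt, hb a ha⟩
  · rw [if_neg hb] at h
    exact absurd rfl h

lemma vv_indep {m : ℕ} : LinearIndependent (ZMod 2) (vv (m := m)) := by
  rw [Fintype.linearIndependent_iff]
  intro g hg S
  induction S using Finset.strongInduction with
  | _ S ih =>
    have h0 := congrFun hg ⟨eS S, eS_lt S⟩
    rw [Finset.sum_apply] at h0
    have hterm : ∀ T : Finset (Fin m),
        (g T • vv T) (⟨eS S, eS_lt S⟩ : Fin (2^m)) = if T ⊆ S then g T else 0 := by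
      intro T
      have : vv T (⟨eS S, eS_lt S⟩ : Fin (2^m)) = if T ⊆ S then 1 else 0 := by
        rw [vv_eq_ite]
        congr 1
        rw [eq_iff_iff]
        constructor
        · intro h j hj
          have := h j hj
          rwa [show ((⟨eS S, eS_lt S⟩ : Fin (2^m)) : ℕ) = eS S from rfl, testBit_eS] at this
        · intro h j hj
          rw [show ((⟨eS S, eS_lt S⟩ : Fin (2^m)) : ℕ) = eS S from rfl, testBit_eS]
          exact h hj
      rw [Pi.smul_apply, this]
      by_cases h : T ⊆ S <;> simp [h]
    rw [Finset.sum_congr rfl (fun T _ => hterm T), Pi.zero_apply, ← Finset.sum_filter] at h0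
    have hfil : (univ : Finset (Finset (Fin m))).filter (fun T => T ⊆ S) = S.powerset := by
      ext T
      simp [Finset.mem_powerset]
    rw [hfil, Finset.sum_eq_single_of_mem S (Finset.mem_powerset_self S)] at h0
    · exact h0
    · intro T hT hne
      exact ih T (Finset.ssubset_iff_subset_ne.2 ⟨Finset.mem_powerset.1 hT, hne⟩)

lemma RMcode_eq_span (r m : ℕ) :
    RMcode r m = Submodule.span (ZMod 2)
      (vv '' {S : Finset (Fin m) | S.card ≤ r}) := by
  apply le_antisymm
  · rw [RMcode, Submodule.span_le]
    rintro w ⟨f, hdeg, rfl⟩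
    have hw : (fun i => MvPolynomial.eval
          (fun j : Fin m => if Nat.testBit i.val j.val then (1:ZMod 2) else 0) f)
        = ∑ d ∈ f.support, MvPolynomial.coeff d f • vv d.support := by
      funext i
      rw [Finset.sum_apply, MvPolynomial.eval_eq]
      apply Finset.sum_congr rfl
      intro d _
      rw [Pi.smul_apply, smul_eq_mul]
      congr 1
      rw [vv]
      apply Finset.prod_congr rfl
      intro j hj
      have hd : d j ≠ 0 := Finsupp.mem_support_iff.1 hj
      by_cases hb : Nat.testBit i.val j.val
      · rw [if_pos hb, one_pow]
      · rw [if_neg hb, zero_pow hd]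
    rw [hw]
    apply Submodule.sum_mem
    intro d hd
    apply Submodule.smul_mem
    apply Submodule.subset_span
    refine ⟨d.support, ?_, rfl⟩
    simp only [Set.mem_setOf_eq]
    calc d.support.card = d.support.card • 1 := by rw [smul_eq_mul, mul_one]
      _ ≤ ∑ j ∈ d.support, d j := Finset.card_nsmul_le_sum _ _ _
          (fun j hj => Nat.one_le_iff_ne_zero.2 (Finsupp.mem_support_iff.1 hj))
      _ = d.sum (fun _ e => e) := rfl
      _ ≤ f.totalDegree := MvPolynomial.le_totalDegree hd
      _ ≤ r := hdeg
  · rw [Submodule.span_le]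
    rintro w ⟨S, hS, rfl⟩
    apply Submodule.subset_span
    refine ⟨∏ j ∈ S, MvPolynomial.X j, ?_, ?_⟩
    · calc (∏ j ∈ S, MvPolynomial.X j : MvPolynomial (Fin m) (ZMod 2)).totalDegree
          ≤ ∑ j ∈ S, (MvPolynomial.X j : MvPolynomial (Fin m) (ZMod 2)).totalDegree :=
            MvPolynomial.totalDegree_finset_prod _ _
        _ = ∑ j ∈ S, 1 := by
            apply Finset.sum_congr rfl
            intro j _
            exact MvPolynomial.totalDegree_X j
        _ = S.card := by rw [Finset.sum_const, smul_eq_mul, mul_one]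
        _ ≤ r := hS
    · funext i
      rw [MvPolynomial.eval_prod, vv]
      apply Finset.prod_congr rfl
      intro j _
      rw [MvPolynomial.eval_X]


lemma chi_bot {F : Type} [Field F] {n : ℕ} :
    chi (⊥ : Submodule F (Fin n → F)) = ∅ := by
  ext i
  simp only [chi, Set.mem_setOf_eq, Set.mem_empty_iff_false, iff_false, not_exists]
  rintro c ⟨hc, hne⟩
  rw [Submodule.mem_bot] at hc
  subst hc
  exact hne rfl

lemma chi_eq_empty_iff {F : Type} [Field F] {n : ℕ} {D : Submodule F (Fin n → F)} :
    chi D = ∅ → D = ⊥ := by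
  intro h
  rw [Submodule.eq_bot_iff]
  intro c hc
  by_contra hne
  have : ∃ i, c i ≠ 0 := by
    by_contra hall
    push_neg at hall
    exact hne (funext hall)
  obtain ⟨i, hi⟩ := this
  have : i ∈ chi D := ⟨c, hc, hi⟩
  rw [h] at this
  exact this

lemma Ucap_set_nonempty {F : Type} [Field F] {n : ℕ} (C : Submodule F (Fin n → F)) (s : ℕ) :
    Set.Nonempty {d : ℕ | ∃ D : Submodule F (Fin n → F),
      D ≤ C ∧ (chi D).ncard ≤ s ∧ finrank F ↥D = d} := by
  refine ⟨0, ⊥, bot_le, ?_, finrank_bot F _⟩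
  rw [chi_bot]
  simp

lemma Ucap_set_bdd {F : Type} [Field F] [Fintype F] {n : ℕ} (C : Submodule F (Fin n → F)) (s : ℕ) :
    BddAbove {d : ℕ | ∃ D : Submodule F (Fin n → F),
      D ≤ C ∧ (chi D).ncard ≤ s ∧ finrank F ↥D = d} := by
  refine ⟨finrank F (Fin n → F), ?_⟩
  rintro d ⟨D, -, -, rfl⟩
  exact Submodule.finrank_le D

lemma Ucap_le {F : Type} [Field F] [Fintype F] {n : ℕ} {C : Submodule F (Fin n → F)} {s V : ℕ}
    (h : ∀ D : Submodule F (Fin n → F), D ≤ C → (chi D).ncard ≤ s → finrank F ↥D ≤ V) :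
    Ucap C s ≤ V := by
  apply csSup_le (Ucap_set_nonempty C s)
  rintro d ⟨D, h1, h2, rfl⟩
  exact h D h1 h2

lemma Ucap_ge {F : Type} [Field F] [Fintype F] {n : ℕ} {C : Submodule F (Fin n → F)} {s V : ℕ}
    (D : Submodule F (Fin n → F)) (h1 : D ≤ C) (h2 : (chi D).ncard ≤ s)
    (h3 : finrank F ↥D = V) : V ≤ Ucap C s :=
  le_csSup (Ucap_set_bdd C s) ⟨D, h1, h2, h3⟩

/-- the lower bound: explicit subcode of dimension `Fcnt r m s` supported high -/
theorem Ucap_lower (r m s : ℕ) : Fcnt r m s ≤ Ucap (RMcode r m) s := by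
  classical
  set A := (univ : Finset (Finset (Fin m))).filter
    (fun S => S.card ≤ r ∧ 2 ^ m ≤ eS S + s) with hA
  apply Ucap_ge (Submodule.span (ZMod 2) (vv '' (A : Set (Finset (Fin m)))))
  · rw [RMcode_eq_span]
    apply Submodule.span_mono
    apply Set.image_mono
    intro S hS
    rw [Finset.mem_coe, hA, Finset.mem_filter] at hS
    exact hS.2.1
  · -- chi bound
    have hsub : chi (Submodule.span (ZMod 2) (vv '' (A : Set (Finset (Fin m)))))
        ⊆ {i : Fin (2^m) | 2 ^ m ≤ (i:ℕ) + s} := by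
      rintro i ⟨c, hc, hci⟩
      rw [Finsupp.mem_span_image_iff_linearCombination] at hc
      obtain ⟨l, hl, rfl⟩ := hc
      rw [Finsupp.linearCombination_apply, Finsupp.sum] at hci
      rw [Finset.sum_apply] at hci
      have hex : ∃ S ∈ l.support, (l S • vv S) i ≠ 0 := by
        by_contra hall
        push_neg at hall
        exact hci (Finset.sum_eq_zero hall)
      obtain ⟨S, hSsup, hSne⟩ := hex
      have hvv : vv S i ≠ 0 := by
        intro h
        rw [Pi.smul_apply, h, smul_zero] at hSne
        exact hSne rfl
      have h1 : eS S ≤ (i:ℕ) := vv_support hvv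
      rw [Finsupp.mem_supported] at hl
      have h2 : S ∈ A := hl hSsup
      rw [hA, Finset.mem_filter] at h2
      simp only [Set.mem_setOf_eq]
      omega
    have hset : {i : Fin (2^m) | 2 ^ m ≤ (i:ℕ) + s}
        = ↑((univ : Finset (Fin (2^m))).filter (fun (i : Fin (2^m)) => 2 ^ m ≤ (i:ℕ) + s)) := by
      ext i
      simp
    calc (chi _).ncard
        ≤ ({i : Fin (2^m) | 2 ^ m ≤ (i:ℕ) + s}).ncard :=
          Set.ncard_le_ncard hsub (Set.toFinite _)
      _ ≤ s := by
          rw [hset, Set.ncard_coe_finset]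
          have hinj : ((univ : Finset (Fin (2^m))).filter (fun (i : Fin (2^m)) => 2 ^ m ≤ (i:ℕ) + s)).card
              ≤ (Finset.Ico (2^m - s) (2^m)).card := by
            refine Finset.card_le_card_of_injOn (fun (i : Fin (2^m)) => (i:ℕ)) ?_ ?_
            · intro i hi
              simp only [Finset.mem_coe, Finset.mem_filter, Finset.mem_univ, true_and] at hi
              simp only [Finset.mem_coe, Finset.mem_Ico]
              have := i.isLt
              omega
            · intro a _ b _ h
              exact Fin.val_injective h
          rw [Nat.card_Ico] at hinj
          omega
  · -- finrank
    have hind : LinearIndependent (ZMod 2)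
        (fun T : (A : Set (Finset (Fin m))) => vv (T : Finset (Fin m))) :=
      vv_indep.comp _ Subtype.val_injective
    have hcard := finrank_span_eq_card hind
    rw [← Set.image_eq_range] at hcard
    rw [hcard]
    rw [Fcnt]
    exact Fintype.card_coe A



section proj
variable {m : ℕ}

def lowIdx (i : Fin (2^m)) : Fin (2^(m+1)) :=
  ⟨i.val, by have := i.isLt; have := two_pow_succ' m; omega⟩

def highIdx (i : Fin (2^m)) : Fin (2^(m+1)) :=
  ⟨i.val + 2^m, by have := i.isLt; have := two_pow_succ' m; omega⟩

lemma lowIdx_inj : Function.Injective (lowIdx (m := m)) := by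
  intro a b h
  have := congrArg Fin.val h
  exact Fin.ext this

lemma highIdx_inj : Function.Injective (highIdx (m := m)) := by
  intro a b h
  have := congrArg Fin.val h
  simp only [highIdx] at this
  exact Fin.ext (by omega)

def pi0 : (Fin (2^(m+1)) → ZMod 2) →ₗ[ZMod 2] (Fin (2^m) → ZMod 2) :=
  LinearMap.funLeft _ _ lowIdx

def pi1 : (Fin (2^(m+1)) → ZMod 2) →ₗ[ZMod 2] (Fin (2^m) → ZMod 2) :=
  LinearMap.funLeft _ _ highIdx

lemma pi0_apply (c : Fin (2^(m+1)) → ZMod 2) (i : Fin (2^m)) : pi0 c i = c (lowIdx i) := rfl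
lemma pi1_apply (c : Fin (2^(m+1)) → ZMod 2) (i : Fin (2^m)) : pi1 c i = c (highIdx i) := rfl

lemma vv_lowIdx (S : Finset (Fin (m+1))) (i : Fin (2^m)) :
    vv S (lowIdx i) = if Fin.last m ∈ S then 0 else vv (dropS S) i := by
  have hlow : ((lowIdx i : Fin (2^(m+1))) : ℕ) = i.val := rfl
  by_cases h : Fin.last m ∈ S
  · rw [if_pos h, vv_eq_ite, if_neg]
    intro hall
    have hb := hall _ h
    rw [hlow, show ((Fin.last m : Fin (m+1)):ℕ) = m from rfl,
      Nat.testBit_lt_two_pow i.isLt] at hb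
    exact absurd hb (by simp)
  · rw [if_neg h, vv_eq_ite, vv_eq_ite]
    congr 1
    rw [eq_iff_iff]
    constructor
    · intro hall j hj
      rw [mem_dropS] at hj
      have := hall _ hj
      rwa [hlow] at this
    · intro hall j hj
      induction j using Fin.lastCases with
      | last => exact absurd hj h
      | cast j =>
        rw [hlow]
        exact hall j (mem_dropS.2 hj)

lemma vv_highIdx (S : Finset (Fin (m+1))) (i : Fin (2^m)) :
    vv S (highIdx i) = vv (dropS S) i := by
  have hbit : ∀ k, k < m →
      Nat.testBit ((highIdx i : Fin (2^(m+1))) : ℕ) k = Nat.testBit i.val k := by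
    intro k hk
    show Nat.testBit (i.val + 2^m) k = _
    rw [Nat.add_comm, Nat.testBit_two_pow_add_gt hk]
  have hlast : Nat.testBit ((highIdx i : Fin (2^(m+1))) : ℕ) m = true := by
    show Nat.testBit (i.val + 2^m) m = true
    rw [Nat.add_comm, Nat.testBit_two_pow_add_eq, Nat.testBit_lt_two_pow i.isLt]
    rfl
  rw [vv_eq_ite, vv_eq_ite]
  congr 1
  rw [eq_iff_iff]
  constructor
  · intro h j hj
    rw [mem_dropS] at hj
    have := h _ hj
    rw [show ((Fin.castSucc j : Fin (m+1)) : ℕ) = (j:ℕ) from rfl] at this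
    rwa [← hbit _ j.isLt]
  · intro h j hj
    induction j using Fin.lastCases with
    | last =>
      rw [show ((Fin.last m : Fin (m+1)) : ℕ) = m from rfl]
      exact hlast
    | cast j =>
      rw [show ((Fin.castSucc j : Fin (m+1)) : ℕ) = (j:ℕ) from rfl, hbit _ j.isLt]
      exact h j (mem_dropS.2 hj)

lemma pi0_vv (S : Finset (Fin (m+1))) :
    pi0 (vv S) = if Fin.last m ∈ S then 0 else vv (dropS S) := by
  funext i
  rw [pi0_apply, vv_lowIdx]
  by_cases h : Fin.last m ∈ S
  · rw [if_pos h, if_pos h]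
    rfl
  · rw [if_neg h, if_neg h]

lemma pi1_vv (S : Finset (Fin (m+1))) : pi1 (vv S) = vv (dropS S) := by
  funext i
  rw [pi1_apply, vv_highIdx]

lemma liftS_dropS_subset (S : Finset (Fin (m+1))) : liftS (dropS S) ⊆ S := by
  intro j hj
  rw [liftS, Finset.mem_map] at hj
  obtain ⟨j', hj', rfl⟩ := hj
  rw [mem_dropS] at hj'
  exact hj'

lemma card_dropS_le (S : Finset (Fin (m+1))) : (dropS S).card ≤ S.card := by
  rw [← card_liftS]
  exact Finset.card_le_card (liftS_dropS_subset S)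

lemma card_dropS {S : Finset (Fin (m+1))} (h : Fin.last m ∈ S) :
    (dropS S).card + 1 = S.card := by
  have hSeq := eq_insert_last h
  conv_rhs => rw [hSeq]
  rw [Finset.card_insert_of_notMem (last_not_mem_liftS _), card_liftS]

lemma map_pi0_RM (r : ℕ) : (RMcode r (m+1)).map pi0 ≤ RMcode r m := by
  rw [RMcode_eq_span, RMcode_eq_span, Submodule.map_span, Submodule.span_le]
  rintro w ⟨v', ⟨S, hS, rfl⟩, rfl⟩
  rw [SetLike.mem_coe, pi0_vv]
  by_cases h : Fin.last m ∈ S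
  · rw [if_pos h]
    exact Submodule.zero_mem _
  · rw [if_neg h]
    apply Submodule.subset_span
    exact ⟨dropS S, le_trans (card_dropS_le S) hS, rfl⟩

lemma map_pi1_RM (r : ℕ) : (RMcode r (m+1)).map pi1 ≤ RMcode r m := by
  rw [RMcode_eq_span, RMcode_eq_span, Submodule.map_span, Submodule.span_le]
  rintro w ⟨v', ⟨S, hS, rfl⟩, rfl⟩
  rw [SetLike.mem_coe, pi1_vv]
  apply Submodule.subset_span
  exact ⟨dropS S, le_trans (card_dropS_le S) hS, rfl⟩

lemma sum_reindex_lift {V : Type} [AddCommMonoid V] (f : Finset (Fin (m+1)) → V) :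
    ∑ S ∈ (univ : Finset (Finset (Fin (m+1)))).filter (fun S => Fin.last m ∉ S), f S
      = ∑ T : Finset (Fin m), f (liftS T) := by
  apply Finset.sum_nbij' (i := fun S => dropS S) (j := fun T => liftS T)
  · intro S _; exact Finset.mem_univ _
  · intro T _
    rw [Finset.mem_filter]
    exact ⟨Finset.mem_univ _, last_not_mem_liftS T⟩
  · intro S hS
    rw [Finset.mem_filter] at hS
    exact liftS_dropS hS.2
  · intro T _
    exact dropS_liftS T
  · intro S hS
    rw [Finset.mem_filter] at hS
    conv_lhs => rw [← liftS_dropS hS.2]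

lemma sum_reindex_insert {V : Type} [AddCommMonoid V] (f : Finset (Fin (m+1)) → V) :
    ∑ S ∈ (univ : Finset (Finset (Fin (m+1)))).filter (fun S => Fin.last m ∈ S), f S
      = ∑ T : Finset (Fin m), f (insert (Fin.last m) (liftS T)) := by
  apply Finset.sum_nbij' (i := fun S => dropS S)
    (j := fun T => insert (Fin.last m) (liftS T))
  · intro S _; exact Finset.mem_univ _
  · intro T _
    rw [Finset.mem_filter]
    exact ⟨Finset.mem_univ _, Finset.mem_insert_self _ _⟩
  · intro S hS
    rw [Finset.mem_filter] at hS
    exact (eq_insert_last hS.2).symm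
  · intro T _
    rw [dropS_insert_last, dropS_liftS]
  · intro S hS
    rw [Finset.mem_filter] at hS
    conv_lhs => rw [eq_insert_last hS.2]

lemma pi0_linComb (l : Finset (Fin (m+1)) →₀ ZMod 2) :
    pi0 ((Finsupp.linearCombination (ZMod 2) vv) l)
      = ∑ T : Finset (Fin m), l (liftS T) • vv T := by
  rw [LinearMap.map_finsupp_linearCombination, Finsupp.linearCombination_apply, Finsupp.sum]
  rw [Finset.sum_subset (Finset.subset_univ l.support) (fun S _ hS => by
    rw [Finsupp.notMem_support_iff.1 hS, zero_smul])]
  rw [← Finset.sum_filter_add_sum_filter_not univ (fun S => Fin.last m ∈ S)]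
  have hz : ∑ S ∈ filter (fun S => Fin.last m ∈ S) univ,
      l S • (⇑pi0 ∘ vv) S = 0 := by
    apply Finset.sum_eq_zero
    intro S hS
    rw [Finset.mem_filter] at hS
    rw [Function.comp_apply, pi0_vv, if_pos hS.2, smul_zero]
  rw [hz, zero_add, sum_reindex_lift (f := fun S => l S • (⇑pi0 ∘ vv) S)]
  apply Finset.sum_congr rfl
  intro T _
  rw [Function.comp_apply, pi0_vv, if_neg (last_not_mem_liftS T), dropS_liftS]

lemma pi1_linComb (l : Finset (Fin (m+1)) →₀ ZMod 2) :
    pi1 ((Finsupp.linearCombination (ZMod 2) vv) l)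
      = ∑ T : Finset (Fin m), (l (insert (Fin.last m) (liftS T)) + l (liftS T)) • vv T := by
  rw [LinearMap.map_finsupp_linearCombination, Finsupp.linearCombination_apply, Finsupp.sum]
  rw [Finset.sum_subset (Finset.subset_univ l.support) (fun S _ hS => by
    rw [Finsupp.notMem_support_iff.1 hS, zero_smul])]
  rw [← Finset.sum_filter_add_sum_filter_not univ (fun S => Fin.last m ∈ S)]
  rw [sum_reindex_insert (f := fun S => l S • (⇑pi1 ∘ vv) S),
    sum_reindex_lift (f := fun S => l S • (⇑pi1 ∘ vv) S)]
  rw [← Finset.sum_add_distrib]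
  apply Finset.sum_congr rfl
  intro T _
  rw [Function.comp_apply, Function.comp_apply, pi1_vv, pi1_vv,
    dropS_insert_last, dropS_liftS]
  exact (add_smul _ _ _).symm

/-- words of RM(r+1, m+1) vanishing on the lower half restrict to RM(r,m) on the upper half -/
lemma ker_low (r : ℕ) (c : Fin (2^(m+1)) → ZMod 2) (hc : c ∈ RMcode (r+1) (m+1))
    (h0 : pi0 c = 0) : pi1 c ∈ RMcode r m := by
  rw [RMcode_eq_span, Finsupp.mem_span_image_iff_linearCombination] at hc
  obtain ⟨l, hl, rfl⟩ := hc
  rw [Finsupp.mem_supported] at hl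
  rw [pi0_linComb] at h0
  have hzero : ∀ T : Finset (Fin m), l (liftS T) = 0 :=
    Fintype.linearIndependent_iff.1 vv_indep _ h0
  rw [LinearMap.map_finsupp_linearCombination, Finsupp.linearCombination_apply, Finsupp.sum]
  apply Submodule.sum_mem
  intro S hS
  by_cases h : Fin.last m ∈ S
  · rw [Function.comp_apply, pi1_vv]
    apply Submodule.smul_mem
    rw [RMcode_eq_span]
    apply Submodule.subset_span
    refine ⟨dropS S, ?_, rfl⟩
    have hcard := card_dropS h
    have hmem := hl (Finset.mem_coe.2 hS)
    simp only [Set.mem_setOf_eq] at hmem ⊢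
    omega
  · have hlS : l S = 0 := by
      conv_lhs => rw [← liftS_dropS h]
      exact hzero _
    rw [hlS, zero_smul]
    exact Submodule.zero_mem _

/-- words of RM(r+1, m+1) vanishing on the upper half restrict to RM(r,m) on the lower half -/
lemma ker_high (r : ℕ) (c : Fin (2^(m+1)) → ZMod 2) (hc : c ∈ RMcode (r+1) (m+1))
    (h1 : pi1 c = 0) : pi0 c ∈ RMcode r m := by
  rw [RMcode_eq_span, Finsupp.mem_span_image_iff_linearCombination] at hc
  obtain ⟨l, hl, rfl⟩ := hc
  rw [Finsupp.mem_supported] at hl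
  rw [pi1_linComb] at h1
  have hzero : ∀ T : Finset (Fin m),
      l (insert (Fin.last m) (liftS T)) + l (liftS T) = 0 :=
    Fintype.linearIndependent_iff.1 vv_indep _ h1
  rw [pi0_linComb]
  apply Submodule.sum_mem
  intro T _
  by_cases h : l (liftS T) = 0
  · rw [h, zero_smul]
    exact Submodule.zero_mem _
  · apply Submodule.smul_mem
    rw [RMcode_eq_span]
    apply Submodule.subset_span
    refine ⟨T, ?_, rfl⟩
    have hne : l (insert (Fin.last m) (liftS T)) ≠ 0 := by
      intro hz
      have hzT := hzero T
      rw [hz, zero_add] at hzT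
      exact h hzT
    have hmem := hl (Finset.mem_coe.2 (Finsupp.mem_support_iff.2 hne))
    simp only [Set.mem_setOf_eq] at hmem ⊢
    have hc1 : (insert (Fin.last m) (liftS T)).card = T.card + 1 := by
      rw [Finset.card_insert_of_notMem (last_not_mem_liftS _), card_liftS]
    omega

lemma ker_pi01 : LinearMap.ker (pi0 (m := m)) ⊓ LinearMap.ker pi1 = ⊥ := by
  rw [eq_bot_iff]
  intro c hc
  rw [Submodule.mem_inf, LinearMap.mem_ker, LinearMap.mem_ker] at hc
  obtain ⟨h0, h1⟩ := hc
  rw [Submodule.mem_bot]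
  funext i
  have hp := two_pow_succ' m
  rcases lt_or_ge (i : ℕ) (2^m) with h | h
  · have : i = lowIdx ⟨(i:ℕ), h⟩ := Fin.ext rfl
    rw [this]
    exact congrFun h0 _
  · have : i = highIdx ⟨(i:ℕ) - 2^m, by have := i.isLt; omega⟩ := Fin.ext (by
      show (i:ℕ) = (i:ℕ) - 2^m + 2^m
      omega)
    rw [this]
    exact congrFun h1 _

end proj

set_option synthInstance.maxHeartbeats 1000000 in
lemma finrank_decomp {n p : ℕ} (D : Submodule (ZMod 2) (Fin n → ZMod 2))
    (φ : (Fin n → ZMod 2) →ₗ[ZMod 2] (Fin p → ZMod 2)) :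
    finrank (ZMod 2) ↥D = finrank (ZMod 2) ↥(D.map φ)
      + finrank (ZMod 2) ↥(D ⊓ LinearMap.ker φ) := by
  have h := LinearMap.finrank_range_add_finrank_ker (φ.domRestrict D)
  rw [LinearMap.range_domRestrict, LinearMap.ker_domRestrict] at h
  have e1 : Submodule.comap D.subtype (LinearMap.ker φ)
      = Submodule.comap D.subtype (D ⊓ LinearMap.ker φ) := by
    ext x
    simp only [Submodule.mem_comap, Submodule.mem_inf]
    exact ⟨fun hx => ⟨x.2, hx⟩, fun hx => hx.2⟩
  rw [e1] at h
  have e2 : finrank (ZMod 2) ↥(Submodule.comap D.subtype (D ⊓ LinearMap.ker φ))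
      = finrank (ZMod 2) ↥(D ⊓ LinearMap.ker φ) :=
    LinearEquiv.finrank_eq (Submodule.comapSubtypeEquivOfLe inf_le_left)
  rw [e2] at h
  omega


lemma vv_empty_ne {m : ℕ} : (vv (∅ : Finset (Fin m))) ≠ 0 := by
  intro h
  have h0 := congrFun h ⟨0, Nat.two_pow_pos m⟩
  rw [vv, Finset.prod_empty] at h0
  exact one_ne_zero h0

lemma RMcode_zero (m : ℕ) :
    RMcode 0 m = Submodule.span (ZMod 2) {vv (∅ : Finset (Fin m))} := by
  rw [RMcode_eq_span]
  congr 1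
  ext w
  simp only [Set.mem_image, Set.mem_setOf_eq, Nat.le_zero, Finset.card_eq_zero,
    Set.mem_singleton_iff]
  constructor
  · rintro ⟨S, rfl, rfl⟩
    rfl
  · rintro rfl
    exact ⟨∅, rfl, rfl⟩

lemma UB_r0 {m s : ℕ} (D : Submodule (ZMod 2) (Fin (2^m) → ZMod 2))
    (hD : D ≤ RMcode 0 m) (hchi : (chi D).ncard ≤ s) :
    finrank (ZMod 2) ↥D ≤ Fcnt 0 m s := by
  rcases eq_or_ne D ⊥ with rfl | hne
  · rw [finrank_bot]
    exact Nat.zero_le _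
  · obtain ⟨c, hcD, hcne⟩ := Submodule.ne_bot_iff D |>.1 hne
    have hc' : c ∈ Submodule.span (ZMod 2) {vv (∅ : Finset (Fin m))} := by
      rw [← RMcode_zero]
      exact hD hcD
    rw [Submodule.mem_span_singleton] at hc'
    obtain ⟨a, ha⟩ := hc'
    have ha1 : a = 1 := by
      have hd : ∀ b : ZMod 2, b ≠ 0 → b = 1 := by decide
      apply hd
      intro h0
      rw [h0, zero_smul] at ha
      exact hcne ha.symm
    rw [ha1, one_smul] at ha
    have hchiuniv : chi D = Set.univ := by
      ext i
      simp only [Set.mem_univ, iff_true]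
      refine ⟨c, hcD, ?_⟩
      rw [← ha, vv, Finset.prod_empty]
      exact one_ne_zero
    rw [hchiuniv, Set.ncard_univ, Nat.card_eq_fintype_card, Fintype.card_fin] at hchi
    rw [Fcnt_zero_r, if_pos hchi]
    calc finrank (ZMod 2) ↥D ≤ finrank (ZMod 2) ↥(RMcode 0 m) := Submodule.finrank_mono hD
      _ = 1 := by
          rw [RMcode_zero]
          exact finrank_span_singleton vv_empty_ne

theorem UB_main : ∀ (m r s : ℕ) (D : Submodule (ZMod 2) (Fin (2^m) → ZMod 2)),
    D ≤ RMcode r m → (chi D).ncard ≤ s → finrank (ZMod 2) ↥D ≤ Fcnt r m s := by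
  intro m
  induction m with
  | zero =>
    intro r s D hD hchi
    rcases Nat.eq_zero_or_pos s with rfl | hs
    · have h0 : (chi D) = ∅ := by
        rw [← Set.ncard_eq_zero (Set.toFinite _)]
        omega
      rw [chi_eq_empty_iff h0, finrank_bot]
      exact Nat.zero_le _
    · have hle : finrank (ZMod 2) ↥D ≤ 1 := by
        calc finrank (ZMod 2) ↥D ≤ finrank (ZMod 2) (Fin (2^0) → ZMod 2) :=
            Submodule.finrank_le D
          _ = 1 := by rw [finrank_pi]; simp
      rw [Fcnt_fin0, if_pos (show 1 ≤ s by omega)]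
      omega
  | succ m ih =>
    intro r s D hD hchi
    match r with
    | 0 => exact UB_r0 D hD hchi
    | (r+1) =>
      classical
      have hp := two_pow_succ' m
      set A := chi D ∩ {x : Fin (2^(m+1)) | (x:ℕ) < 2^m} with hA
      set B := chi D ∩ {x : Fin (2^(m+1)) | 2^m ≤ (x:ℕ)} with hB
      have hABcard : A.ncard + B.ncard ≤ s := by
        have hdisj : Disjoint A B := by
          rw [Set.disjoint_left]
          rintro x ⟨-, hx1⟩ ⟨-, hx2⟩
          simp only [Set.mem_setOf_eq] at hx1 hx2
          omega
        have hunion : A ∪ B = chi D := by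
          ext x
          simp only [hA, hB, Set.mem_union, Set.mem_inter_iff, Set.mem_setOf_eq]
          by_cases h : (x:ℕ) < 2^m
          · simp [h]
          · simp [h]
            omega
        have := Set.ncard_union_eq hdisj (Set.toFinite _) (Set.toFinite _)
        rw [hunion] at this
        omega
      have hAle : A.ncard ≤ 2^m := by
        have hsub : A ⊆ lowIdx '' Set.univ := by
          rintro x ⟨-, hx⟩
          simp only [Set.mem_setOf_eq] at hx
          exact ⟨⟨(x:ℕ), hx⟩, Set.mem_univ _, Fin.ext rfl⟩
        calc A.ncard ≤ (lowIdx '' Set.univ).ncard := Set.ncard_le_ncard hsub (Set.toFinite _)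
          _ = (Set.univ : Set (Fin (2^m))).ncard := Set.ncard_image_of_injective _ lowIdx_inj
          _ = 2^m := by rw [Set.ncard_univ, Nat.card_eq_fintype_card, Fintype.card_fin]
      have hBle : B.ncard ≤ 2^m := by
        have hsub : B ⊆ highIdx '' Set.univ := by
          rintro x ⟨-, hx⟩
          simp only [Set.mem_setOf_eq] at hx
          refine ⟨⟨(x:ℕ) - 2^m, by have := x.isLt; omega⟩, Set.mem_univ _, Fin.ext ?_⟩
          show (x:ℕ) - 2^m + 2^m = (x:ℕ)
          omega
        calc B.ncard ≤ (highIdx '' Set.univ).ncard := Set.ncard_le_ncard hsub (Set.toFinite _)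
          _ = (Set.univ : Set (Fin (2^m))).ncard := Set.ncard_image_of_injective _ highIdx_inj
          _ = 2^m := by rw [Set.ncard_univ, Nat.card_eq_fintype_card, Fintype.card_fin]
      -- chain 1
      have hd1 := finrank_decomp D pi0
      have hm0 : D.map pi0 ≤ RMcode (r+1) m :=
        le_trans (Submodule.map_mono hD) (map_pi0_RM _)
      have hc0 : (chi (D.map pi0)).ncard ≤ A.ncard := by
        have hsub : lowIdx '' chi (D.map pi0) ⊆ A := by
          rintro _ ⟨i, ⟨w, hw, hwi⟩, rfl⟩
          rw [Submodule.mem_map] at hw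
          obtain ⟨c, hcD, rfl⟩ := hw
          exact ⟨⟨c, hcD, hwi⟩, i.isLt⟩
        calc (chi (D.map pi0)).ncard = (lowIdx '' chi (D.map pi0)).ncard :=
            (Set.ncard_image_of_injective _ lowIdx_inj).symm
          _ ≤ A.ncard := Set.ncard_le_ncard hsub (Set.toFinite _)
      have hK1 : finrank (ZMod 2) ↥(D ⊓ LinearMap.ker pi0)
          = finrank (ZMod 2) ↥((D ⊓ LinearMap.ker pi0).map pi1) := by
        have h := finrank_decomp (D ⊓ LinearMap.ker pi0) pi1
        have hbot : (D ⊓ LinearMap.ker pi0) ⊓ LinearMap.ker pi1 = ⊥ := by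
          rw [eq_bot_iff]
          intro c hc
          rw [Submodule.mem_inf, Submodule.mem_inf] at hc
          have hmem : c ∈ LinearMap.ker pi0 ⊓ LinearMap.ker pi1 :=
            Submodule.mem_inf.2 ⟨hc.1.2, hc.2⟩
          rw [ker_pi01] at hmem
          exact hmem
        rw [hbot, finrank_bot] at h
        omega
      have hm1 : (D ⊓ LinearMap.ker pi0).map pi1 ≤ RMcode r m := by
        intro w hw
        rw [Submodule.mem_map] at hw
        obtain ⟨c, hc, rfl⟩ := hw
        rw [Submodule.mem_inf] at hc
        exact ker_low r c (hD hc.1) (LinearMap.mem_ker.1 hc.2)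
      have hc1 : (chi ((D ⊓ LinearMap.ker pi0).map pi1)).ncard ≤ B.ncard := by
        have hsub : highIdx '' chi ((D ⊓ LinearMap.ker pi0).map pi1) ⊆ B := by
          rintro _ ⟨i, ⟨w, hw, hwi⟩, rfl⟩
          rw [Submodule.mem_map] at hw
          obtain ⟨c, hc, rfl⟩ := hw
          rw [Submodule.mem_inf] at hc
          refine ⟨⟨c, hc.1, hwi⟩, ?_⟩
          show 2^m ≤ (i:ℕ) + 2^m
          omega
        calc (chi ((D ⊓ LinearMap.ker pi0).map pi1)).ncard
            = (highIdx '' chi ((D ⊓ LinearMap.ker pi0).map pi1)).ncard :=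
            (Set.ncard_image_of_injective _ highIdx_inj).symm
          _ ≤ B.ncard := Set.ncard_le_ncard hsub (Set.toFinite _)
      -- chain 2
      have hd2 := finrank_decomp D pi1
      have hm2 : D.map pi1 ≤ RMcode (r+1) m :=
        le_trans (Submodule.map_mono hD) (map_pi1_RM _)
      have hc2 : (chi (D.map pi1)).ncard ≤ B.ncard := by
        have hsub : highIdx '' chi (D.map pi1) ⊆ B := by
          rintro _ ⟨i, ⟨w, hw, hwi⟩, rfl⟩
          rw [Submodule.mem_map] at hw
          obtain ⟨c, hcD, rfl⟩ := hw
          refine ⟨⟨c, hcD, hwi⟩, ?_⟩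
          show 2^m ≤ (i:ℕ) + 2^m
          omega
        calc (chi (D.map pi1)).ncard = (highIdx '' chi (D.map pi1)).ncard :=
            (Set.ncard_image_of_injective _ highIdx_inj).symm
          _ ≤ B.ncard := Set.ncard_le_ncard hsub (Set.toFinite _)
      have hK2 : finrank (ZMod 2) ↥(D ⊓ LinearMap.ker pi1)
          = finrank (ZMod 2) ↥((D ⊓ LinearMap.ker pi1).map pi0) := by
        have h := finrank_decomp (D ⊓ LinearMap.ker pi1) pi0
        have hbot : (D ⊓ LinearMap.ker pi1) ⊓ LinearMap.ker pi0 = ⊥ := by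
          rw [eq_bot_iff]
          intro c hc
          rw [Submodule.mem_inf, Submodule.mem_inf] at hc
          have hmem : c ∈ LinearMap.ker pi0 ⊓ LinearMap.ker pi1 :=
            Submodule.mem_inf.2 ⟨hc.2, hc.1.2⟩
          rw [ker_pi01] at hmem
          exact hmem
        rw [hbot, finrank_bot] at h
        omega
      have hm3 : (D ⊓ LinearMap.ker pi1).map pi0 ≤ RMcode r m := by
        intro w hw
        rw [Submodule.mem_map] at hw
        obtain ⟨c, hc, rfl⟩ := hw
        rw [Submodule.mem_inf] at hc
        exact ker_high r c (hD hc.1) (LinearMap.mem_ker.1 hc.2)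
      have hc3 : (chi ((D ⊓ LinearMap.ker pi1).map pi0)).ncard ≤ A.ncard := by
        have hsub : lowIdx '' chi ((D ⊓ LinearMap.ker pi1).map pi0) ⊆ A := by
          rintro _ ⟨i, ⟨w, hw, hwi⟩, rfl⟩
          rw [Submodule.mem_map] at hw
          obtain ⟨c, hc, rfl⟩ := hw
          rw [Submodule.mem_inf] at hc
          exact ⟨⟨c, hc.1, hwi⟩, i.isLt⟩
        calc (chi ((D ⊓ LinearMap.ker pi1).map pi0)).ncard
            = (lowIdx '' chi ((D ⊓ LinearMap.ker pi1).map pi0)).ncard :=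
            (Set.ncard_image_of_injective _ lowIdx_inj).symm
          _ ≤ A.ncard := Set.ncard_le_ncard hsub (Set.toFinite _)
      rcases le_total A.ncard B.ncard with hab | hab
      · have t1 := ih (r+1) (A.ncard) (D.map pi0) hm0 hc0
        have t2 := ih r (B.ncard) ((D ⊓ LinearMap.ker pi0).map pi1) hm1 hc1
        have t3 := Bmain (r := r) hab hBle
        have t4 : Fcnt (r+1) (m+1) (B.ncard + A.ncard) ≤ Fcnt (r+1) (m+1) s :=
          Fcnt_mono_s (by omega)
        omega
      · have t1 := ih (r+1) (B.ncard) (D.map pi1) hm2 hc2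
        have t2 := ih r (A.ncard) ((D ⊓ LinearMap.ker pi1).map pi0) hm3 hc3
        have t3 := Bmain (r := r) hab hAle
        have t4 : Fcnt (r+1) (m+1) (A.ncard + B.ncard) ≤ Fcnt (r+1) (m+1) s :=
          Fcnt_mono_s (by omega)
        omega

theorem Ucap_RM (r m s : ℕ) : Ucap (RMcode r m) s = Fcnt r m s :=
  le_antisymm (Ucap_le (fun D h1 h2 => UB_main m r s D h1 h2)) (Ucap_lower r m s)

lemma RHSb_eq {m r : ℕ} (hm : 1 ≤ m) :
    (if (m + 1) % 2 = 1 then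
        ∑ i ∈ Finset.Icc 1 ((m + 1 - 1) / 2), kRM (r + 1 - 1 - i) (m + 1 - 2 * i)
      else
        ∑ i ∈ Finset.Icc 1 ((m + 1) / 2), kRM (r + 1 - 1 - i) (m + 1 - 2 * i))
      = RHSa r m := by
  rcases Nat.mod_two_eq_zero_or_one m with hpar | hpar
  · rw [if_pos (by omega), RHSa, if_neg (by omega)]
    rw [← Finset.Ico_add_one_right_eq_Icc, Finset.sum_Ico_eq_sum_range]
    have hrange : (m + 1 - 1) / 2 + 1 - 1 = (m - 2) / 2 + 1 := by omega
    rw [hrange]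
    apply Finset.sum_congr rfl
    intro i _
    congr 1 <;> omega
  · rw [if_neg (by omega), RHSa, if_pos hpar]
    rw [← Finset.Ico_add_one_right_eq_Icc, Finset.sum_Ico_eq_sum_range]
    have hrange : (m + 1) / 2 + 1 - 1 = (m - 1) / 2 + 1 := by omega
    rw [hrange]
    apply Finset.sum_congr rfl
    intro i _
    congr 1 <;> omega


/-- for `m ≥ 2`, `r ≤ m` and `m < 2r`, the values of
`U_α(RM(r,m))` and `U_β(RM(r,m))`, according to the parity of `m`. -/
theorem stmt13 (r m : ℕ) (hm : 2 ≤ m) (hrm : r ≤ m) (h : m < 2 * r) :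
    Ucap (RMcode r m) (alph m) =
      (if m % 2 = 1 then
        ∑ i ∈ Finset.range ((m - 1) / 2 + 1), kRM (r - 1 - i) (m - 1 - 2 * i)
      else
        ∑ i ∈ Finset.range ((m - 2) / 2 + 1), kRM (r - 1 - i) (m - 1 - 2 * i)) ∧
    Ucap (RMcode r m) (bet m) =
      (if m % 2 = 1 then
        ∑ i ∈ Finset.Icc 1 ((m - 1) / 2), kRM (r - 1 - i) (m - 2 * i)
      else
        ∑ i ∈ Finset.Icc 1 (m / 2), kRM (r - 1 - i) (m - 2 * i)) := by
  constructor
  · rw [Ucap_RM, idA m r (by omega) (by omega)]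
    rfl
  · rw [Ucap_RM]
    obtain ⟨m', rfl⟩ : ∃ m', m = m' + 1 := ⟨m - 1, by omega⟩
    obtain ⟨r', rfl⟩ : ∃ r', r = r' + 1 := ⟨r - 1, by omega⟩
    rw [idB, idA m' r' (by omega) (by omega)]
    exact (RHSb_eq (by omega)).symm
end

section
/- Let m ≥ 2 and let i, j be integers with 0 ≤ i ≤ α^(m) and 0 ≤ j ≤ β^(m). If m is even and P^(m)(i,j) holds, then P^(m+1)(2i+1, 2j) holds. If m is odd and P^(m)(i,j) holds, then P^(m+1)(2i, 2j+1) holds. -/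
open Module

/-- `wt x`: the number of ones in the binary representation of `x`. -/
def wtN (x : ℕ) : ℕ := (Nat.digits 2 x).count 1

/-- `w_l(S)`: the number of elements of `S` of binary weight at least `l`. -/
def wcount (l : ℕ) (S : Finset ℕ) : ℕ := (S.filter fun x => l ≤ wtN x).card

/-- The statement `P^(m)(i,j)`: for every `l ∈ {1,…,m}`,
`w_l([α−i, α−1]) + w_l([β−j, β−1]) ≥ w_l([1, i+j])`. -/
def Pm (m i j : ℕ) : Prop :=
  ∀ l, 1 ≤ l → l ≤ m →
    wcount l (Finset.Icc (alph m - i) (alph m - 1)) +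
      wcount l (Finset.Icc (bet m - j) (bet m - 1)) ≥
      wcount l (Finset.Icc 1 (i + j))

lemma wtN_two_mul (x : ℕ) : wtN (2*x) = wtN x := by
  rcases Nat.eq_zero_or_pos x with rfl | hx
  · rfl
  · unfold wtN
    rw [Nat.digits_def' (by norm_num : 1 < 2) (by omega)]
    simp [Nat.mul_div_cancel_left _ (by norm_num : 0 < 2), Nat.mul_mod_right]

lemma wtN_two_mul_add_one (x : ℕ) : wtN (2*x+1) = wtN x + 1 := by
  unfold wtN
  rw [Nat.digits_def' (by norm_num : 1 < 2) (by omega)]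
  have h1 : (2*x+1) % 2 = 1 := by omega
  have h2 : (2*x+1) / 2 = x := by omega
  rw [h1, h2, List.count_cons]
  simp

lemma wtN_pos {x : ℕ} (hx : 0 < x) : 1 ≤ wtN x := by
  induction x using Nat.strong_induction_on with
  | _ x ih =>
    unfold wtN
    rw [Nat.digits_def' (by norm_num : 1 < 2) hx, List.count_cons]
    rcases Nat.even_or_odd x with he | ho
    · have h0 : x % 2 = 0 := Nat.even_iff.mp he
      have hx2 : 0 < x / 2 := by omega
      have := ih (x/2) (by omega) hx2
      unfold wtN at this
      omega
    · have h1 : x % 2 = 1 := Nat.odd_iff.mp ho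
      simp [h1]

lemma wtN_le_of_lt_pow {x k : ℕ} (h : x < 2^k) : wtN x ≤ k := by
  rcases Nat.eq_zero_or_pos x with rfl | hx
  · simp [wtN]
  · calc wtN x ≤ (Nat.digits 2 x).length := List.count_le_length
    _ = Nat.log 2 x + 1 := Nat.digits_len 2 x (by norm_num) (by omega)
    _ ≤ k := by
        have : Nat.log 2 x < k := (Nat.log_lt_iff_lt_pow (by norm_num) (by omega)).mpr h
        omega

lemma Icc_double (a b : ℕ) : Finset.Icc (2*a) (2*b+1) =
    (Finset.Icc a b).image (fun x => 2*x) ∪ (Finset.Icc a b).image (fun x => 2*x+1) := by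
  ext x
  simp only [Finset.mem_Icc, Finset.mem_union, Finset.mem_image]
  constructor
  · intro h
    rcases Nat.even_or_odd x with ⟨y, hy⟩ | ⟨y, hy⟩
    · exact Or.inl ⟨y, ⟨by omega, by omega⟩, by omega⟩
    · exact Or.inr ⟨y, ⟨by omega, by omega⟩, by omega⟩
  · rintro (⟨y, ⟨h1, h2⟩, rfl⟩ | ⟨y, ⟨h1, h2⟩, rfl⟩) <;> omega

lemma wcount_double (l a b : ℕ) :
    wcount (l+1) (Finset.Icc (2*a) (2*b+1)) =
    wcount (l+1) (Finset.Icc a b) + wcount l (Finset.Icc a b) := by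
  unfold wcount
  rw [Icc_double, Finset.filter_union, Finset.card_union_of_disjoint, Finset.filter_image,
    Finset.filter_image, Finset.card_image_of_injective _ (fun x y h => by omega),
    Finset.card_image_of_injective _ (fun x y h => by omega)]
  · congr 1
    · congr 1; apply Finset.filter_congr; intro x _; simp [wtN_two_mul]
    · congr 1; apply Finset.filter_congr; intro x _; simp [wtN_two_mul_add_one]
  · apply Finset.disjoint_filter_filter
    rw [Finset.disjoint_left]
    rintro z hz hz'
    simp only [Finset.mem_image] at hz hz'
    obtain ⟨y, _, rfl⟩ := hz
    obtain ⟨y', _, h⟩ := hz'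
    omega

lemma wcount_zero (S : Finset ℕ) : wcount 0 S = S.card := by
  unfold wcount
  rw [Finset.filter_true_of_mem]
  intro x _; exact Nat.zero_le _

lemma wcount_insert (l x : ℕ) (S : Finset ℕ) (hx : x ∉ S) :
    wcount l (insert x S) = wcount l S + (if l ≤ wtN x then 1 else 0) := by
  unfold wcount
  rw [Finset.filter_insert]
  split
  · rw [Finset.card_insert_of_notMem (fun h => hx (Finset.mem_of_mem_filter _ h))]
  · simp

lemma wcount_Icc_zero (l c : ℕ) (hl : 1 ≤ l) :
    wcount l (Finset.Icc 0 c) = wcount l (Finset.Icc 1 c) := by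
  have h : Finset.Icc 0 c = insert 0 (Finset.Icc 1 c) := by
    ext x; simp [Finset.mem_Icc]; omega
  rw [h, wcount_insert _ _ _ (by simp)]
  have : wtN 0 = 0 := by simp [wtN]
  rw [this]
  simp; omega

lemma step_aux (m i j a b : ℕ) (hm : 2 ≤ m) (hi : i ≤ a) (hj : j ≤ b)
    (ha : 1 ≤ a) (hb : 1 ≤ b) (hab : a + b = 2^m - 1)
    (hP : ∀ l, 1 ≤ l → l ≤ m →
      wcount l (Finset.Icc (a - i) (a - 1)) + wcount l (Finset.Icc (b - j) (b - 1)) ≥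
      wcount l (Finset.Icc 1 (i + j))) :
    ∀ l, 1 ≤ l → l ≤ m + 1 →
      wcount l (Finset.Icc (2*(a-i)) (2*a)) + wcount l (Finset.Icc (2*(b-j)) (2*b - 1)) ≥
      wcount l (Finset.Icc 1 (2*(i+j)+1)) := by
  intro l hl1 hl2
  obtain ⟨l', rfl⟩ : ∃ l', l = l' + 1 := ⟨l - 1, by omega⟩
  -- decompose first interval
  have eA : Finset.Icc (2*(a-i)) (2*a) = insert (2*a) (Finset.Icc (2*(a-i)) (2*(a-1)+1)) := by
    ext x; simp only [Finset.mem_Icc, Finset.mem_insert]; omega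
  have hnm : 2*a ∉ Finset.Icc (2*(a-i)) (2*(a-1)+1) := by
    simp only [Finset.mem_Icc]; omega
  -- decompose second interval
  have eB : Finset.Icc (2*(b-j)) (2*b-1) = Finset.Icc (2*(b-j)) (2*(b-1)+1) := by
    congr 1; omega
  -- RHS
  have eC : wcount (l'+1) (Finset.Icc 1 (2*(i+j)+1)) =
      wcount (l'+1) (Finset.Icc 0 (i+j)) + wcount l' (Finset.Icc 0 (i+j)) := by
    rw [← wcount_Icc_zero _ _ (by omega)]
    have : (0:ℕ) = 2*0 := rfl
    rw [this, wcount_double]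
  rw [eA, eB, eC, wcount_insert _ _ _ hnm, wcount_double, wcount_double, wtN_two_mul]
  have hC0 : ∀ l'', 1 ≤ l'' → wcount l'' (Finset.Icc 0 (i+j)) = wcount l'' (Finset.Icc 1 (i+j)) :=
    fun l'' h => wcount_Icc_zero _ _ h
  rcases Nat.eq_zero_or_pos l' with rfl | hl'
  · -- l = 1
    simp only [Nat.zero_add]
    have h1 := hP 1 (by omega) (by omega)
    have hwa : (if 1 ≤ wtN a then 1 else 0) = 1 := by
      have := wtN_pos (show 0 < a by omega); simp; omega
    rw [hwa, hC0 1 (by omega)]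
    simp only [wcount_zero, Nat.card_Icc]
    omega
  · rcases Nat.lt_or_ge l' m with hlm | hlm
    · -- 2 ≤ l'+1 ≤ m
      have h1 := hP (l'+1) (by omega) (by omega)
      have h2 := hP l' (by omega) (by omega)
      rw [hC0 (l'+1) (by omega), hC0 l' (by omega)]
      have : (0:ℕ) ≤ if l'+1 ≤ wtN a then 1 else 0 := by positivity
      omega
    · -- l' = m
      have h2 := hP l' (by omega) (by omega)
      have hz : wcount (l'+1) (Finset.Icc 0 (i+j)) = 0 := by
        unfold wcount
        rw [Finset.card_eq_zero, Finset.filter_eq_empty_iff]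
        intro x hx
        simp only [Finset.mem_Icc] at hx
        have h2m : 1 ≤ 2^m := Nat.one_le_two_pow
        have hw : wtN x ≤ m := wtN_le_of_lt_pow (by omega)
        omega
      rw [hC0 l' (by omega), hz]
      have : (0:ℕ) ≤ if l'+1 ≤ wtN a then 1 else 0 := by positivity
      omega

lemma pow_two_mod_three : ∀ m : ℕ, (Even m → 2^m % 3 = 1) ∧ (Odd m → 2^m % 3 = 2) := by
  intro m
  induction m with
  | zero => simp
  | succ n ih =>
    obtain ⟨h1, h2⟩ := ih
    have hp : 2^(n+1) = 2 * 2^n := by ring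
    constructor
    · intro h
      have hn : Odd n := Nat.Even.sub_odd (by omega) h odd_one
      have := h2 hn
      omega
    · intro h
      have hn : Even n := by
        rcases Nat.even_or_odd n with he | ho
        · exact he
        · exact absurd (Nat.even_add_one.mpr (Nat.not_even_iff_odd.mpr ho))
            (Nat.not_even_iff_odd.mpr h)
      have := h1 hn
      omega

/-- Lemma 6: for even `m`, `P^(m)(i,j)` implies `P^(m+1)(2i+1, 2j)`;
for odd `m`, `P^(m)(i,j)` implies `P^(m+1)(2i, 2j+1)`. -/
theorem stmt15 (m : ℕ) (hm : 2 ≤ m) (i j : ℕ) (hi : i ≤ alph m) (hj : j ≤ bet m) :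
    (Even m → Pm m i j → Pm (m + 1) (2 * i + 1) (2 * j)) ∧
    (Odd m → Pm m i j → Pm (m + 1) (2 * i) (2 * j + 1)) := by
  have hp1 : 2^(m+1) = 2 * 2^m := by ring
  have hp2 : 2^(m+2) = 4 * 2^m := by ring
  have h4 : 4 ≤ 2^m := by
    calc 4 = 2^2 := rfl
    _ ≤ 2^m := Nat.pow_le_pow_right (by norm_num) hm
  have da : alph m = 2^(m+1)/3 := rfl
  have db : bet m = 2^m/3 := rfl
  have da1 : alph (m+1) = 2^(m+2)/3 := rfl
  have db1 : bet (m+1) = 2^(m+1)/3 := rfl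
  constructor
  · intro hev hP
    have h3 : 2^m % 3 = 1 := (pow_two_mod_three m).1 hev
    have hab : alph m + bet m = 2^m - 1 := by omega
    have ha1 : 1 ≤ alph m := by omega
    have hb1 : 1 ≤ bet m := by omega
    intro l hl1 hl2
    have e1 : alph (m+1) - (2*i+1) = 2*(alph m - i) := by omega
    have e2 : alph (m+1) - 1 = 2*(alph m) := by omega
    have e3 : bet (m+1) - 2*j = 2*(bet m - j) := by omega
    have e4 : bet (m+1) - 1 = 2*(bet m) - 1 := by omega
    have e5 : 2*i+1 + 2*j = 2*(i+j)+1 := by omega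
    rw [e1, e2, e3, e4, e5]
    exact step_aux m i j (alph m) (bet m) hm hi hj ha1 hb1 hab hP l hl1 hl2
  · intro hodd hP
    have h3 : 2^m % 3 = 2 := (pow_two_mod_three m).2 hodd
    have hab : alph m + bet m = 2^m - 1 := by omega
    have ha1 : 1 ≤ alph m := by omega
    have hb1 : 1 ≤ bet m := by omega
    intro l hl1 hl2
    have e1 : alph (m+1) - 2*i = 2*(alph m - i) := by omega
    have e2 : alph (m+1) - 1 = 2*(alph m) - 1 := by omega
    have e3 : bet (m+1) - (2*j+1) = 2*(bet m - j) := by omega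
    have e4 : bet (m+1) - 1 = 2*(bet m) := by omega
    have e5 : 2*i + (2*j+1) = 2*(j+i)+1 := by omega
    rw [e1, e2, e3, e4, e5]
    have := step_aux m j i (bet m) (alph m) hm hj hi hb1 ha1 (by omega)
      (fun l h1 h2 => by
        rw [Nat.add_comm j i]
        have := hP l h1 h2
        omega) l hl1 hl2
    omega
end
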